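/- arXiv:1002.1432 — 3 statements merged into one kernel-verified Lean document; each statement's English description precedes it below -/
import Mathlib

section
/- Let F be a differential field of characteristic zero and let E = F(ζ₁,…,ζ_t) be an antiderivative extension of F. Then the fixed field E^{G(E|F)} = {y ∈ E : σ(y) = y for all σ ∈ G(E|F)} equals F. -/
/-- A derivation on a field: an additive map satisfying the Leibniz rule. -/
def IsDeriv {E : Type*} [Field E] (D : E → E) : Prop :=
  (∀ x y : E, D (x + y) = D x + D y) ∧ ∀ x y : E, D (x * y) = D x * y + x * D y

/-- A subfield closed under the derivation, i.e. a differential subfield. -/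
def IsDiffSubfield {E : Type*} [Field E] (D : E → E) (K : Subfield E) : Prop :=
  ∀ x ∈ K, D x ∈ K

/-- The subfield generated by a subfield `F` together with a set `S`, i.e. `F(S)`. -/
def adjoinSF {E : Type*} [Field E] (F : Subfield E) (S : Set E) : Subfield E :=
  Subfield.closure (↑F ∪ S)

/-- `ζ 0, …, ζ (n-1)` are iterated antiderivatives of `F`:
`(ζ i)' ∈ F(ζ 0, …, ζ (i-1))` for every `i`. -/
def IsIterAntideriv {E : Type*} [Field E] (D : E → E) (F : Subfield E) {n : ℕ}
    (ζ : Fin n → E) : Prop :=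
  ∀ i, D (ζ i) ∈ adjoinSF F (ζ '' {j | j < i})

/-- `M` is a no new constants extension of `K`: the constants of `M` are exactly
the constants of `K`. -/
def NoNewConstants {E : Type*} [Field E] (D : E → E) (K M : Subfield E) : Prop :=
  K ≤ M ∧ ∀ x ∈ M, D x = 0 → x ∈ K

/-- `K` is an iterated antiderivative extension of `F`. -/
def IsIAE {E : Type*} [Field E] (D : E → E) (F K : Subfield E) : Prop :=
  NoNewConstants D F K ∧
    ∃ (n : ℕ) (ζ : Fin n → E), IsIterAntideriv D F ζ ∧ K = adjoinSF F (Set.range ζ)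

/-- `K` is an antiderivative extension of `F`. -/
def IsAE {E : Type*} [Field E] (D : E → E) (F K : Subfield E) : Prop :=
  NoNewConstants D F K ∧
    ∃ (n : ℕ) (ζ : Fin n → E), (∀ i, D (ζ i) ∈ (F : Set E)) ∧ K = adjoinSF F (Set.range ζ)

/-- A differential automorphism of `E` over `F`: a field automorphism fixing `F`
pointwise and commuting with the derivation. -/
def IsDiffAut {E : Type*} [Field E] (D : E → E) (F : Subfield E) (σ : E ≃+* E) : Prop :=
  (∀ x ∈ F, σ x = x) ∧ ∀ y : E, σ (D y) = D (σ y)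

/-- `M` is a minimal differential field extension of `K`. -/
def IsMinimalDiffExt {E : Type*} [Field E] (D : E → E) (K M : Subfield E) : Prop :=
  IsDiffSubfield D M ∧ K < M ∧
    ∀ L : Subfield E, IsDiffSubfield D L → K ≤ L → L ≤ M → L = K ∨ L = M

/-- The field of constants of a differential subfield `F`. -/
def constantsOf {E : Type*} [Field E] (D : E → E) (hD : IsDeriv D) (F : Subfield E) :
    Subfield E where
  carrier := {x : E | x ∈ F ∧ D x = 0}
  zero_mem' := by
    refine ⟨F.zero_mem, ?_⟩
    have h := hD.1 0 0
    simp only [add_zero] at h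
    exact left_eq_add.mp h
  one_mem' := by
    refine ⟨F.one_mem, ?_⟩
    have h := hD.2 1 1
    simp only [mul_one, one_mul] at h
    exact left_eq_add.mp h
  add_mem' := by
    rintro a b ⟨haF, ha⟩ ⟨hbF, hb⟩
    exact ⟨F.add_mem haF hbF, by rw [hD.1 a b, ha, hb, add_zero]⟩
  mul_mem' := by
    rintro a b ⟨haF, ha⟩ ⟨hbF, hb⟩
    exact ⟨F.mul_mem haF hbF, by rw [hD.2 a b, ha, hb, zero_mul, mul_zero, add_zero]⟩
  neg_mem' := by
    rintro a ⟨haF, ha⟩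
    refine ⟨F.neg_mem haF, ?_⟩
    have h0 : D 0 = 0 := by
      have h := hD.1 0 0
      simp only [add_zero] at h
      exact left_eq_add.mp h
    have h := hD.1 a (-a)
    rw [add_neg_cancel, h0, ha, zero_add] at h
    exact h.symm
  inv_mem' := by
    rintro a ⟨haF, ha⟩
    refine ⟨F.inv_mem haF, ?_⟩
    by_cases h0 : a = 0
    · subst h0; rw [inv_zero]; exact ha
    · have h1 : D 1 = 0 := by
        have h := hD.2 1 1
        simp only [mul_one, one_mul] at h
        exact left_eq_add.mp h
      have h := hD.2 a a⁻¹
      rw [mul_inv_cancel₀ h0, h1, ha, zero_mul, zero_add] at h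
      rcases mul_eq_zero.mp h.symm with h' | h'
      · exact absurd h' h0
      · exact h'

/-- The antiderivative closure of `L` in `E`: the subfield generated over `L`
by all antiderivatives of `L` lying in `E`. -/
def adCl {E : Type*} [Field E] (D : E → E) (L : Subfield E) : Subfield E :=
  adjoinSF L {x : E | D x ∈ L}

/-- The differential subfield generated by `F` and `u`, i.e. `F⟨u⟩ = F(u, u', u'', …)`. -/
def diffAdjoin {E : Type*} [Field E] (D : E → E) (F : Subfield E) (u : E) : Subfield E :=
  sInf {M : Subfield E | IsDiffSubfield D M ∧ F ≤ M ∧ u ∈ M}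

/-- The transcendence degree of `K` over `F` (both viewed inside an ambient field `E`):
the supremum of cardinalities of subsets of `K` that are algebraically independent
over `F`. -/
noncomputable def trdegSF {E : Type*} [Field E] (F K : Subfield E) : Cardinal :=
  ⨆ s : {s : Set E // s ⊆ (K : Set E) ∧ AlgebraicIndependent F ((↑) : s → E)},
    Cardinal.mk s.1

section DerivBasics

variable {E : Type*} [Field E] {D : E → E}

theorem IsDeriv.zero (hD : IsDeriv D) : D 0 = 0 := by
  have h := hD.1 0 0; simp only [add_zero] at h; exact left_eq_add.mp h

theorem IsDeriv.one (hD : IsDeriv D) : D 1 = 0 := by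
  have h := hD.2 1 1; simp only [mul_one, one_mul] at h; exact left_eq_add.mp h

theorem IsDeriv.natCast (hD : IsDeriv D) (n : ℕ) : D (n : E) = 0 := by
  induction n with
  | zero => exact_mod_cast hD.zero
  | succ k ih => push_cast; rw [hD.1, ih, hD.one, add_zero]

theorem IsDeriv.neg (hD : IsDeriv D) (x : E) : D (-x) = -D x := by
  have h := hD.1 x (-x)
  rw [add_neg_cancel, hD.zero] at h
  linear_combination -h

theorem IsDeriv.intCast (hD : IsDeriv D) (n : ℤ) : D (n : E) = 0 := by
  cases n with
  | ofNat k => simpa using hD.natCast k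
  | negSucc k =>
      push_cast
      rw [hD.neg, show ((k : E) + 1) = ((k + 1 : ℕ) : E) by push_cast; ring,
        hD.natCast, neg_zero]

theorem IsDeriv.inv (hD : IsDeriv D) {x : E} (hx : x ≠ 0) :
    D x⁻¹ = -(x⁻¹ * x⁻¹ * D x) := by
  have h := hD.2 x x⁻¹
  rw [mul_inv_cancel₀ hx, hD.one] at h
  have h2 : x * D x⁻¹ = -(D x * x⁻¹) := by linear_combination -h
  have h3 : D x⁻¹ = x⁻¹ * (x * D x⁻¹) := by
    rw [← mul_assoc, inv_mul_cancel₀ hx, one_mul]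
  rw [h3, h2]; ring

theorem IsDeriv.sub (hD : IsDeriv D) (x y : E) : D (x - y) = D x - D y := by
  rw [sub_eq_add_neg, hD.1, hD.neg]; ring


/-- equalizer of two derivations is a subfield -/
theorem deriv_eq_on_closure {D₂ : E → E} (hD : IsDeriv D) (hD₂ : IsDeriv D₂)
    (s : Set E) (h : ∀ z ∈ s, D z = D₂ z) : ∀ z ∈ Subfield.closure s, D z = D₂ z := by
  let T : Subfield E :=
    { carrier := {z : E | D z = D₂ z}
      zero_mem' := by simp [hD.zero, hD₂.zero]
      one_mem' := by simp [hD.one, hD₂.one]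
      add_mem' := by intro a b ha hb; simp only [Set.mem_setOf_eq] at *
                     rw [hD.1, hD₂.1, ha, hb]
      mul_mem' := by intro a b ha hb; simp only [Set.mem_setOf_eq] at *
                     rw [hD.2, hD₂.2, ha, hb]
      neg_mem' := by intro a ha; simp only [Set.mem_setOf_eq] at *
                     rw [hD.neg, hD₂.neg, ha]
      inv_mem' := by
        intro a ha; simp only [Set.mem_setOf_eq] at *
        by_cases h0 : a = 0
        · subst h0; rw [inv_zero, ha]
        · rw [hD.inv h0, hD₂.inv h0, ha] }
  intro z hz
  exact (Subfield.closure_le (t := T)).mpr (fun z hz => h z hz) hz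

/-- adjoin is differential if derivatives of generators land inside -/
theorem isDiffSubfield_adjoin (hD : IsDeriv D) (F : Subfield E) (hF : IsDiffSubfield D F)
    (S : Set E) (hS : ∀ z ∈ S, D z ∈ adjoinSF F S) : IsDiffSubfield D (adjoinSF F S) := by
  set M := adjoinSF F S with hM
  let T : Subfield E :=
    { carrier := {z : E | z ∈ M ∧ D z ∈ M}
      zero_mem' := ⟨M.zero_mem, by rw [hD.zero]; exact M.zero_mem⟩
      one_mem' := ⟨M.one_mem, by rw [hD.one]; exact M.zero_mem⟩
      add_mem' := by rintro a b ⟨ha, ha'⟩ ⟨hb, hb'⟩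
                     exact ⟨M.add_mem ha hb, by rw [hD.1]; exact M.add_mem ha' hb'⟩
      mul_mem' := by rintro a b ⟨ha, ha'⟩ ⟨hb, hb'⟩
                     exact ⟨M.mul_mem ha hb,
                       by rw [hD.2]; exact M.add_mem (M.mul_mem ha' hb) (M.mul_mem ha hb')⟩
      neg_mem' := by rintro a ⟨ha, ha'⟩
                     exact ⟨M.neg_mem ha, by rw [hD.neg]; exact M.neg_mem ha'⟩
      inv_mem' := by
        rintro a ⟨ha, ha'⟩
        refine ⟨M.inv_mem ha, ?_⟩
        by_cases h0 : a = 0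
        · subst h0; rw [inv_zero, hD.zero]; exact M.zero_mem
        · rw [hD.inv h0]
          exact M.neg_mem (M.mul_mem (M.mul_mem (M.inv_mem ha) (M.inv_mem ha)) ha') }
  have hle : M ≤ T := by
    rw [hM]
    apply Subfield.closure_le.mpr
    rintro z (hz | hz)
    · exact ⟨Subfield.subset_closure (Or.inl hz), Subfield.subset_closure (Or.inl (hF z hz))⟩
    · exact ⟨Subfield.subset_closure (Or.inr hz), hS z hz⟩
  intro z hz
  exact (hle hz).2


end DerivBasics

namespace S10

variable {E : Type*} [Field E] {D : E → E}

/-- coefficient-wise application of `D` to a polynomial -/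
noncomputable def Dpoly (hD : IsDeriv D) (p : Polynomial E) : Polynomial E :=
  ⟨⟨Finsupp.mapRange D hD.zero p.toFinsupp.coeff⟩⟩

@[simp] theorem Dpoly_coeff (hD : IsDeriv D) (p : Polynomial E) (n : ℕ) :
    (Dpoly hD p).coeff n = D (p.coeff n) := rfl

theorem IsDeriv.pow (hD : IsDeriv D) (z : E) (n : ℕ) :
    D (z ^ (n + 1)) = (n + 1 : E) * z ^ n * D z := by
  induction n with
  | zero => simp
  | succ k ih =>
      rw [pow_succ, hD.2, ih, pow_succ]
      push_cast
      ring

theorem eval_deriv (hD : IsDeriv D) (p : Polynomial E) (z : E) :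
    D (p.eval z) = (Dpoly hD p).eval z + (Polynomial.derivative p).eval z * D z := by
  induction p using Polynomial.induction_on' with
  | add p q hp hq =>
      have hadd : Dpoly hD (p + q) = Dpoly hD p + Dpoly hD q := by
        ext n; simp [hD.1]
      rw [Polynomial.eval_add, hD.1, hp, hq, hadd, map_add, Polynomial.eval_add,
        Polynomial.eval_add]
      ring
  | monomial n a =>
      have hmono : Dpoly hD (Polynomial.monomial n a) = Polynomial.monomial n (D a) := by
        ext k
        simp only [Dpoly_coeff, Polynomial.coeff_monomial]
        by_cases h : n = k <;> simp [h, hD.zero]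
      rw [hmono, Polynomial.derivative_monomial, Polynomial.eval_monomial,
        Polynomial.eval_monomial, Polynomial.eval_monomial]
      cases n with
      | zero => simp [hD.2, hD.zero]
      | succ m =>
          rw [hD.2, IsDeriv.pow hD]
          simp only [Nat.add_sub_cancel]
          push_cast
          ring


/-- concrete "algebraic over the subfield L" -/
def AlgOver (L : Subfield E) (z : E) : Prop :=
  ∃ p : Polynomial E, p ≠ 0 ∧ (∀ n, p.coeff n ∈ L) ∧ p.eval z = 0

theorem ostrowski [CharZero E] (hD : IsDeriv D) {F L : Subfield E} (hFL : F ≤ L)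
    (hL : IsDiffSubfield D L) (hNNC : ∀ x : E, D x = 0 → x ∈ F)
    {z : E} (hz : D z ∈ L) (halg : AlgOver L z) : z ∈ L := by
  classical
  have hex : ∃ k : ℕ, ∃ p : Polynomial E,
      p ≠ 0 ∧ (∀ n, p.coeff n ∈ L) ∧ p.eval z = 0 ∧ p.natDegree = k := by
    obtain ⟨p, h1, h2, h3⟩ := halg
    exact ⟨p.natDegree, p, h1, h2, h3, rfl⟩
  obtain ⟨p, hp0, hpc, hpz, hpd⟩ := Nat.find_spec hex
  have hmin : ∀ q' : Polynomial E, q' ≠ 0 → (∀ n, q'.coeff n ∈ L) → q'.eval z = 0 →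
      p.natDegree ≤ q'.natDegree := by
    intro q' h1 h2 h3
    rw [hpd]
    exact Nat.find_min' hex ⟨q', h1, h2, h3, rfl⟩
  have hc0 : p.leadingCoeff ≠ 0 := Polynomial.leadingCoeff_ne_zero.mpr hp0
  set q := Polynomial.C p.leadingCoeff⁻¹ * p with hqdef
  have hq0 : q ≠ 0 := mul_ne_zero (by simpa using inv_ne_zero hc0) hp0
  have hqc : ∀ n, q.coeff n ∈ L := by
    intro n
    simp only [hqdef, Polynomial.coeff_C_mul]
    exact L.mul_mem (L.inv_mem (hpc p.natDegree)) (hpc n)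
  have hqz : q.eval z = 0 := by simp [hqdef, hpz]
  have hqdeg : q.natDegree = p.natDegree := by
    rw [hqdef, Polynomial.natDegree_C_mul (inv_ne_zero hc0)]
  have hqmonic : q.coeff q.natDegree = 1 := by
    rw [hqdeg, hqdef, Polynomial.coeff_C_mul]
    exact inv_mul_cancel₀ hc0
  set n := q.natDegree with hn
  have hn1 : 1 ≤ n := by
    rcases Nat.eq_zero_or_pos n with h0 | h
    · exfalso
      have hqC : q = Polynomial.C (q.coeff 0) := Polynomial.eq_C_of_natDegree_eq_zero h0
      have h1 : q.coeff 0 = 1 := by rw [← h0]; exact hqmonic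
      rw [hqC, h1] at hqz
      simp at hqz
    · exact h
  set r := Dpoly hD q + Polynomial.C (D z) * Polynomial.derivative q with hrdef
  have hrc : ∀ m, r.coeff m ∈ L := by
    intro m
    simp only [hrdef, Polynomial.coeff_add, Polynomial.coeff_C_mul, Dpoly_coeff,
      Polynomial.coeff_derivative]
    refine L.add_mem (hL _ (hqc m)) (L.mul_mem hz (L.mul_mem (hqc (m+1)) ?_))
    exact_mod_cast natCast_mem L (m+1)
  have hrz : r.eval z = 0 := by
    have h := eval_deriv hD q z
    rw [hqz, hD.zero] at h
    simp only [hrdef, Polynomial.eval_add, Polynomial.eval_mul, Polynomial.eval_C]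
    linear_combination -h
  have hrhigh : ∀ m, n ≤ m → r.coeff m = 0 := by
    intro m hm
    have h1 : q.coeff (m+1) = 0 := Polynomial.coeff_eq_zero_of_natDegree_lt (by omega)
    have h2 : D (q.coeff m) = 0 := by
      rcases eq_or_lt_of_le hm with h | h
      · rw [← h, hqmonic, hD.one]
      · rw [Polynomial.coeff_eq_zero_of_natDegree_lt (by omega), hD.zero]
    simp only [hrdef, Polynomial.coeff_add, Polynomial.coeff_C_mul, Dpoly_coeff,
      Polynomial.coeff_derivative, h1, h2]
    ring
  have hr0 : r = 0 := by
    by_contra hr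
    have hge := hmin r hr hrc hrz
    have hle : r.natDegree ≤ n - 1 := by
      rw [Polynomial.natDegree_le_iff_coeff_eq_zero]
      intro N hN
      exact hrhigh N (by omega)
    omega
  have hkey : D (q.coeff (n-1)) + D z * (n : E) = 0 := by
    have h := congrArg (fun s => Polynomial.coeff s (n-1)) hr0
    simp only [hrdef, Polynomial.coeff_add, Polynomial.coeff_C_mul, Dpoly_coeff,
      Polynomial.coeff_derivative, Polynomial.coeff_zero] at h
    rw [show n - 1 + 1 = n from by omega, hqmonic, Nat.cast_sub hn1] at h
    push_cast at h ⊢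
    linear_combination h
  have hnE : (n : E) ≠ 0 := Nat.cast_ne_zero.mpr (by omega)
  have hconst : D (z + q.coeff (n-1) * (n : E)⁻¹) = 0 := by
    rw [hD.1, hD.2, hD.inv hnE, hD.natCast]
    have hDa : D (q.coeff (n-1)) = -(D z * (n : E)) := by linear_combination hkey
    rw [hDa]
    field_simp
    ring
  have hmem : z + q.coeff (n-1) * (n : E)⁻¹ ∈ F := hNNC _ hconst
  have h2 : q.coeff (n-1) * (n : E)⁻¹ ∈ L :=
    L.mul_mem (hqc (n-1)) (L.inv_mem (by exact_mod_cast natCast_mem L n))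
  have h3 := L.sub_mem (hFL hmem) h2
  simpa using h3


section MvStuff
open MvPolynomial

variable {K : Type*} [Field K]

noncomputable def shiftHom {r : ℕ} (c : Fin r → K) :
    MvPolynomial (Fin r) K →ₐ[K] MvPolynomial (Fin r) K :=
  aeval (fun i => X i + C (c i))

theorem mv_eq_zero_of_vanish : ∀ {r : ℕ} (S : Fin r → Set K), (∀ i, (S i).Infinite) →
    ∀ (P : MvPolynomial (Fin r) K), (∀ v : Fin r → K, (∀ i, v i ∈ S i) → eval v P = 0) → P = 0 := by
  intro r
  induction r with
  | zero =>
      intro S hS P h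
      have h0 := h (fun i => i.elim0) (fun i => i.elim0)
      have hC := eq_C_of_isEmpty P
      rw [hC] at h0 ⊢
      rw [eval_C] at h0
      rw [h0, map_zero]
  | succ r ih =>
      intro S hS P h
      set Q := finSuccEquiv K r P with hQ
      have hcoeff : ∀ j, Q.coeff j = 0 := by
        intro j
        apply ih (fun i => S i.succ) (fun i => hS i.succ)
        intro w hw
        have hzero : Polynomial.map (eval w) Q = 0 := by
          apply Polynomial.eq_zero_of_infinite_isRoot
          apply Set.Infinite.mono _ (hS 0)
          intro y hy
          have := h (Fin.cons y w) (by
            intro i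
            refine Fin.cases ?_ ?_ i
            · simpa using hy
            · intro k; simpa using hw k)
          rw [eval_eq_eval_mv_eval'] at this
          exact this
        have := congrArg (fun s => Polynomial.coeff s j) hzero
        simpa using this
      have hQ0 : Q = 0 := Polynomial.ext fun j => by simp [hcoeff j]
      have := congrArg (finSuccEquiv K r).symm hQ0
      simpa [hQ] using this

theorem mv_exists_eval_ne_zero [Infinite K] {r : ℕ} (Q : MvPolynomial (Fin r) K)
    (h : Q ≠ 0) : ∃ v : Fin r → K, eval v Q ≠ 0 := by
  by_contra hc
  push_neg at hc
  exact h (MvPolynomial.funext fun v => by rw [hc v, map_zero])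

theorem shiftHom_comp {r : ℕ} (c d : Fin r → K) (P : MvPolynomial (Fin r) K) :
    shiftHom c (shiftHom d P) = shiftHom (c + d) P := by
  have : (shiftHom c).comp (shiftHom d) = shiftHom (c + d) := by
    apply algHom_ext
    intro i
    simp [shiftHom, map_add, aeval_X, aeval_C, add_assoc]
  exact congrFun (congrArg (fun f => f.toFun) this) P

theorem eval_shiftHom {r : ℕ} (c : Fin r → K) (v : Fin r → K) (P : MvPolynomial (Fin r) K) :
    eval v (shiftHom c P) = eval (v + c) P := by
  have : ((aeval v : MvPolynomial (Fin r) K →ₐ[K] K).comp (shiftHom c)) =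
      aeval (v + c) := by
    apply algHom_ext
    intro i
    simp [shiftHom, Pi.add_apply]
  have h := congrFun (congrArg (fun f => f.toFun) this) P
  have h1 : aeval v (shiftHom c P) = aeval (v + c) P := h
  rwa [aeval_eq_eval₂Hom, aeval_eq_eval₂Hom, Algebra.algebraMap_self] at h1

theorem ratio_const [CharZero K] {r : ℕ} (p q : MvPolynomial (Fin r) K) (hq : q ≠ 0)
    (h : ∀ m : Fin r → ℕ, p * shiftHom (fun i => (m i : K)) q
        = q * shiftHom (fun i => (m i : K)) p) :
    ∃ c : K, p = C c * q := by
  obtain ⟨v, hv⟩ := mv_exists_eval_ne_zero q hq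
  set c := eval v p / eval v q with hc
  refine ⟨c, ?_⟩
  set h₀ := p - C c * q with hh0
  have hrel : ∀ m : Fin r → ℕ, h₀ * shiftHom (fun i => (m i : K)) q
      = q * shiftHom (fun i => (m i : K)) h₀ := by
    intro m
    have hsh : shiftHom (fun i => (m i : K)) h₀
        = shiftHom (fun i => (m i : K)) p - C c * shiftHom (fun i => (m i : K)) q := by
      simp only [hh0, map_sub, map_mul]
      congr 1
      congr 1
      simp [shiftHom, aeval_C, algebraMap_eq]
    rw [hsh]
    linear_combination h m
  have hvanish : ∀ m : Fin r → ℕ, eval (v + fun i => (m i : K)) h₀ = 0 := by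
    intro m
    have := congrArg (eval v) (hrel m)
    rw [map_mul, map_mul, eval_shiftHom, eval_shiftHom] at this
    have hv0 : eval v h₀ = 0 := by
      simp only [hh0, map_sub, map_mul, eval_C, hc]
      field_simp
      ring
    rw [hv0, zero_mul] at this
    rcases mul_eq_zero.mp this.symm with h' | h'
    · exact absurd h' hv
    · exact h'
  have hzero : h₀ = 0 := by
    apply mv_eq_zero_of_vanish (fun i => Set.range (fun n : ℕ => v i + (n : K)))
    · intro i
      apply Set.infinite_range_of_injective
      intro a b hab
      have h1 : (a : K) = (b : K) := add_left_cancel hab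
      exact_mod_cast h1
    · intro u hu
      choose m hm using hu
      have hu' : u = v + fun i => ((m i : ℕ) : K) := by
        funext i
        rw [← hm i]
        simp
      rw [hu']
      exact hvanish _
  have := sub_eq_zero.mp (hh0 ▸ hzero)
  exact this


theorem shiftHom_zero {K : Type*} [Field K] {r : ℕ} (P : MvPolynomial (Fin r) K) :
    shiftHom (0 : Fin r → K) P = P := by
  have h : shiftHom (0 : Fin r → K) = AlgHom.id K (MvPolynomial (Fin r) K) :=
    algHom_ext fun i => by simp [shiftHom]
  rw [h, AlgHom.id_apply]

variable {E : Type*} [Field E] {D : E → E}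

theorem fixed_in_F [CharZero E] (hD : IsDeriv D)
    (F : Subfield E) (hF : IsDiffSubfield D F)
    (r : ℕ) (x : Fin r → E) (hx : AlgebraicIndependent F x) (hxF : ∀ i, D (x i) ∈ F)
    (hxtop : adjoinSF F (Set.range x) = ⊤)
    (y : E) (hy : ∀ σ : E ≃+* E, IsDiffAut D F σ → σ y = y) : y ∈ F := by
  classical
  have hxinj : Function.Injective ⇑(aeval x : MvPolynomial (Fin r) (↥F) →ₐ[↥F] E) :=
    algebraicIndependent_iff_injective_aeval.mp hx
  set A : Subalgebra (↥F) E := (aeval x : MvPolynomial (Fin r) (↥F) →ₐ[↥F] E).range with hA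
  -- A contains F and the x i
  have hFA : ∀ f ∈ F, f ∈ A := by
    intro f hf
    rw [hA, AlgHom.mem_range]
    exact ⟨C ⟨f, hf⟩, by rw [aeval_C]; rfl⟩
  have hxA : ∀ i, x i ∈ A := by
    intro i
    rw [hA, AlgHom.mem_range]
    exact ⟨X i, by rw [aeval_X]⟩
  -- every element of E is a quotient of elements of A
  have hquot : ∀ z : E, ∃ a ∈ A, ∃ b ∈ A, b ≠ 0 ∧ z * b = a := by
    intro z
    have hz : z ∈ adjoinSF F (Set.range x) := by rw [hxtop]; trivial
    rw [adjoinSF, Subfield.mem_closure_iff] at hz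
    obtain ⟨a, ha, b, hb, hdiv⟩ := hz
    have hsub : Subring.closure ((F : Set E) ∪ Set.range x) ≤ A.toSubring := by
      apply Subring.closure_le.mpr
      rintro w (hw | ⟨i, rfl⟩)
      · exact hFA w hw
      · exact hxA i
    by_cases hb0 : b = 0
    · subst hb0
      refine ⟨0, A.zero_mem, 1, A.one_mem, one_ne_zero, ?_⟩
      rw [← hdiv]
      simp
    · exact ⟨a, hsub ha, b, hsub hb, hb0, by rw [← hdiv, div_mul_cancel₀ a hb0]⟩
  haveI hFR : IsFractionRing (↥A) E := by
    constructor
    constructor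
    · rintro ⟨⟨b, hbA⟩, hb⟩
      have hb0 : b ≠ 0 := by
        intro h0
        have : (⟨b, hbA⟩ : ↥A) = 0 := Subtype.ext h0
        rw [this] at hb
        exact zero_notMem_nonZeroDivisors hb
      exact isUnit_iff_ne_zero.mpr hb0
    · intro z
      obtain ⟨a, haA, b, hbA, hb0, hzb⟩ := hquot z
      refine ⟨⟨⟨a, haA⟩, ⟨⟨b, hbA⟩, mem_nonZeroDivisors_of_ne_zero fun h => hb0 (congrArg Subtype.val h)⟩⟩, ?_⟩
      exact hzb
    · intro a b h
      exact ⟨1, by rw [Subtype.ext (h : (a : E) = b)]⟩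
  -- the algebra isomorphism onto A
  set ealg : MvPolynomial (Fin r) (↥F) ≃ₐ[↥F] ↥A := AlgEquiv.ofInjective _ hxinj with healg
  have hesymm : ∀ a : ↥A, aeval x (ealg.symm a) = (a : E) := by
    intro a
    conv_rhs => rw [← ealg.apply_symm_apply a]
    rw [healg]
    exact (AlgEquiv.ofInjective_apply _ hxinj _).symm
  -- shifted aeval maps
  have hcomp : ∀ c : Fin r → (↥F), ∀ P : MvPolynomial (Fin r) (↥F),
      aeval (fun i => x i + (c i : E)) P = aeval x (shiftHom c P) := by
    intro c P
    have h : (aeval (fun i => x i + (c i : E)) : MvPolynomial (Fin r) (↥F) →ₐ[↥F] E)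
        = (aeval x).comp (shiftHom c) := by
      apply algHom_ext
      intro i
      rw [AlgHom.comp_apply, show shiftHom c (X i) = X i + C (c i) from by
        rw [shiftHom, aeval_X], aeval_X,
        show (aeval x) (X i + C (c i)) = aeval x (X i) + aeval x (C (c i)) from
          (aeval x : MvPolynomial (Fin r) (↥F) →ₐ[↥F] E).map_add _ _,
        aeval_X, aeval_C]
      rfl
    rw [h]
    rfl
  have hshinj : ∀ c : Fin r → (↥F),
      Function.Injective ⇑(aeval (fun i => x i + (c i : E)) : MvPolynomial (Fin r) (↥F) →ₐ[↥F] E) := by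
    intro c P Q h
    rw [hcomp, hcomp] at h
    have h2 := hxinj h
    have h3 := congrArg (shiftHom (-c)) h2
    rw [shiftHom_comp, shiftHom_comp, neg_add_cancel, shiftHom_zero, shiftHom_zero] at h3
    exact h3
  -- the lifted ring homs
  set g : (Fin r → (↥F)) → (↥A →+* E) := fun c =>
    ((aeval (fun i => x i + (c i : E)) : MvPolynomial (Fin r) (↥F) →ₐ[↥F] E) : MvPolynomial (Fin r) (↥F) →+* E).comp
      ((ealg.symm : ↥A ≃ₐ[↥F] MvPolynomial (Fin r) (↥F)) : ↥A →+* MvPolynomial (Fin r) (↥F)) with hg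
  have hg_apply : ∀ c a, g c a = aeval x (shiftHom c (ealg.symm a)) := by
    intro c a
    rw [hg]
    simp only [RingHom.comp_apply]
    rw [← hcomp]
    rfl
  have hg_inj : ∀ c, Function.Injective ⇑(g c) := by
    intro c
    have hco : ⇑(g c) = ⇑(aeval (fun i => x i + (c i : E)) : MvPolynomial (Fin r) (↥F) →ₐ[↥F] E)
        ∘ ⇑(ealg.symm) := by
      rw [hg]
      rfl
    rw [hco]
    exact (hshinj c).comp ealg.symm.injective
  set σ : (Fin r → (↥F)) → (E →+* E) := fun c => IsFractionRing.lift (hg_inj c) with hσ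
  have hσA : ∀ c (a : ↥A), σ c (a : E) = aeval x (shiftHom c (ealg.symm a)) := by
    intro c a
    rw [← hg_apply]
    exact IsFractionRing.lift_algebraMap (hg_inj c) a
  have hσaeval : ∀ c P, σ c (aeval x P) = aeval x (shiftHom c P) := by
    intro c P
    have hmem : aeval x P ∈ A := ⟨P, rfl⟩
    have h1 : ealg.symm ⟨aeval x P, hmem⟩ = P := by
      apply ealg.injective
      rw [ealg.apply_symm_apply]
      exact Subtype.ext (AlgEquiv.ofInjective_apply _ hxinj P)
    have := hσA c ⟨aeval x P, hmem⟩
    rw [h1] at this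
    exact this
  have hσinv : ∀ c, (σ (-c)).comp (σ c) = RingHom.id E := by
    intro c
    apply IsLocalization.ringHom_ext (nonZeroDivisors (↥A))
    ext a
    simp only [RingHom.comp_apply, RingHom.id_apply]
    rw [show (algebraMap (↥A) E) a = (a : E) from rfl]
    rw [hσA c a]
    rw [hσaeval (-c) (shiftHom c (ealg.symm a))]
    rw [shiftHom_comp, neg_add_cancel, shiftHom_zero, hesymm]
  set τ : (Fin r → (↥F)) → (E ≃+* E) := fun c =>
    RingEquiv.ofRingHom (σ c) (σ (-c)) (by
      have := hσinv (-c)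
      rwa [neg_neg] at this) (hσinv c) with hτ
  have hτ_apply : ∀ c (z : E), τ c z = σ c z := fun c z => rfl
  have hτF : ∀ c, ∀ f ∈ F, τ c f = f := by
    intro c f hf
    rw [hτ_apply]
    have hmem : f ∈ A := hFA f hf
    have h1 : ealg.symm ⟨f, hmem⟩ = C ⟨f, hf⟩ := by
      apply ealg.injective
      rw [ealg.apply_symm_apply]
      refine Subtype.ext ?_
      rw [healg]
      rw [AlgEquiv.ofInjective_apply]
      rw [aeval_C]
      rfl
    have := hσA c ⟨f, hmem⟩
    rw [h1] at this
    rw [show ((⟨f, hmem⟩ : ↥A) : E) = f from rfl] at this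
    rw [this]
    have : shiftHom c (C (⟨f, hf⟩ : ↥F)) = C ⟨f, hf⟩ := by
      rw [shiftHom]
      rw [aeval_C]
      rfl
    rw [this, aeval_C]
    rfl
  -- differential automorphism property
  have hτdiff : ∀ c : Fin r → (↥F), (∀ i, D ((c i : E)) = 0) → IsDiffAut D F (τ c) := by
    intro c hc
    refine ⟨hτF c, ?_⟩
    set D₂ : E → E := fun z => (τ c).symm (D (τ c z)) with hD₂
    have hD₂deriv : IsDeriv D₂ := by
      constructor
      · intro a b
        rw [hD₂]
        simp only [map_add, hD.1]
      · intro a b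
        rw [hD₂]
        simp only [map_mul, hD.2, map_add, map_mul]
        have h1 : (τ c).symm (τ c a) = a := (τ c).symm_apply_apply a
        have h2 : (τ c).symm (τ c b) = b := (τ c).symm_apply_apply b
        rw [h1, h2]
    have hsymmF : ∀ f ∈ F, (τ c).symm f = f := by
      intro f hf
      have h1 : τ c ((τ c).symm f) = f := (τ c).apply_symm_apply f
      exact (τ c).injective (by rw [h1, hτF c f hf])
    have heq : ∀ z : E, D z = D₂ z := by
      intro z
      have hz : z ∈ Subfield.closure ((F : Set E) ∪ Set.range x) := by
        have : z ∈ adjoinSF F (Set.range x) := by rw [hxtop]; trivial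
        exact this
      refine deriv_eq_on_closure hD hD₂deriv _ ?_ z hz
      rintro w (hw | ⟨i, rfl⟩)
      · show D w = (τ c).symm (D (τ c w))
        rw [hτF c w hw]
        exact (hsymmF _ (hF w hw)).symm
      · show D (x i) = (τ c).symm (D (τ c (x i)))
        have hxi : τ c (x i) = x i + (c i : E) := by
          rw [hτ_apply]
          have h5 := hσaeval c (X i)
          rw [aeval_X] at h5
          rw [h5, ← hcomp c (X i), aeval_X]
        rw [hxi, hD.1, hc i, add_zero]
        exact (hsymmF _ (hxF i)).symm
    intro z
    have h1 : D z = (τ c).symm (D (τ c z)) := heq z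
    have h2 := congrArg (τ c) h1
    rwa [(τ c).apply_symm_apply] at h2
  -- apply to y
  obtain ⟨a, haA, b, hbA, hb0, hyb⟩ := hquot y
  rw [hA, AlgHom.mem_range] at haA hbA
  obtain ⟨P, hP⟩ := haA
  obtain ⟨Q, hQ⟩ := hbA
  have hQ0 : Q ≠ 0 := by
    intro h0
    rw [h0, map_zero] at hQ
    exact hb0 hQ.symm
  have hrel : ∀ m : Fin r → ℕ, P * shiftHom (fun i => (m i : (↥F))) Q
      = Q * shiftHom (fun i => (m i : (↥F))) P := by
    intro m
    set c : Fin r → (↥F) := fun i => ((m i : ℕ) : (↥F)) with hcdef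
    have hc : ∀ i, D ((c i : E)) = 0 := by
      intro i
      rw [hcdef]
      have : (((m i : ℕ) : (↥F)) : E) = ((m i : ℕ) : E) := by push_cast; ring
      rw [this]
      exact hD.natCast (m i)
    have hfix := hy (τ c) (hτdiff c hc)
    have hP' : aeval x P = a := hP
    have hQ' : aeval x Q = b := hQ
    have happ := congrArg (τ c) hyb
    rw [map_mul, hfix, ← hP', ← hQ', hτ_apply, hτ_apply, hσaeval, hσaeval] at happ
    -- happ : y * aeval x (shiftHom c Q) = aeval x (shiftHom c P)
    apply hxinj
    rw [map_mul, map_mul, hP', hQ', ← happ, ← hyb]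
    ring
  obtain ⟨c₀, hc₀⟩ := ratio_const P Q hQ0 hrel
  have hP' : aeval x P = a := hP
  have hQ' : aeval x Q = b := hQ
  have : y * b = (c₀ : E) * b := by
    rw [hyb, ← hP', hc₀, map_mul, ← hQ', aeval_C]
    rfl
  have hyc : y = (c₀ : E) := mul_right_cancel₀ hb0 this
  rw [hyc]
  exact c₀.2


end MvStuff

theorem exists_indep_basis [CharZero E] (hD : IsDeriv D)
    (F : Subfield E) (hF : IsDiffSubfield D F)
    (hNNC : ∀ x : E, D x = 0 → x ∈ F)
    (t : ℕ) (ζ : Fin t → E) (hζ : ∀ i, D (ζ i) ∈ F)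
    (htop : adjoinSF F (Set.range ζ) = ⊤) :
    ∃ (r : ℕ) (x : Fin r → E), AlgebraicIndependent F x ∧ (∀ i, D (x i) ∈ F) ∧
      adjoinSF F (Set.range x) = ⊤ := by
  classical
  set Smax : Set (Finset (Fin t)) :=
    {s | AlgebraicIndependent F (fun i : (↑s : Set (Fin t)) => ζ ↑i)} with hSmax
  have hne : Smax.Nonempty := by
    refine ⟨∅, ?_⟩
    haveI : IsEmpty ((↑(∅ : Finset (Fin t)) : Set (Fin t))) :=
      Set.isEmpty_coe_sort.mpr (by simp)
    rw [hSmax, Set.mem_setOf_eq, algebraicIndependent_empty_type_iff]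
    exact (algebraMap (↥F) E).injective
  obtain ⟨s, hs, hmax⟩ := Set.Finite.exists_maximalFor Finset.card Smax (Set.toFinite _) hne
  rw [hSmax, Set.mem_setOf_eq] at hs
  set L := adjoinSF F (ζ '' ↑s) with hLdef
  have hFL : F ≤ L := fun a ha => Subfield.subset_closure (Or.inl ha)
  have hLdiff : IsDiffSubfield D L := by
    apply isDiffSubfield_adjoin hD F hF
    rintro z ⟨i, _, rfl⟩
    exact Subfield.subset_closure (Or.inl (hζ i))
  have hrange : Set.range (fun i : (↑s : Set (Fin t)) => ζ ↑i) = ζ '' ↑s := by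
    rw [show (fun i : (↑s : Set (Fin t)) => ζ ↑i) = ζ ∘ Subtype.val from rfl,
      Set.range_comp, Subtype.range_coe]
  have hmem : ∀ j : Fin t, ζ j ∈ L := by
    intro j
    by_cases hj : j ∈ s
    · exact Subfield.subset_closure (Or.inr ⟨j, hj, rfl⟩)
    -- j ∉ s : insert j s is not independent, so ζ j is algebraic over L
    have hnotindep : ¬ AlgebraicIndependent F
        (fun o : Option (↑s : Set (Fin t)) => o.elim (ζ j) (fun i => ζ ↑i)) := by
      intro hopt
      have hjs : j ∉ (↑s : Set (Fin t)) := by simpa using hj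
      set e : (↑(insert j s) : Set (Fin t)) ≃ Option (↑s : Set (Fin t)) :=
        (Equiv.setCongr (by simp)).trans (Set.subtypeInsertEquivOption hjs) with hedef
      have hcomp : (fun o : Option (↑s : Set (Fin t)) => o.elim (ζ j) (fun i => ζ ↑i)) ∘ e
          = (fun i : (↑(insert j s) : Set (Fin t)) => ζ ↑i) := by
        funext i
        obtain ⟨i, hi⟩ := i
        by_cases h : i = j
        · rw [hedef]
          simp only [Function.comp_apply, Equiv.trans_apply]
          rw [show ((Equiv.setCongr (by simp : ((↑(insert j s) : Set (Fin t))) = insert j (↑s : Set (Fin t)))) ⟨i, hi⟩) = ⟨i, by simpa [h] using Set.mem_insert j _⟩ from rfl]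
          rw [Set.subtypeInsertEquivOption]
          simp [h]
        · rw [hedef]
          simp only [Function.comp_apply, Equiv.trans_apply]
          rw [show ((Equiv.setCongr (by simp : ((↑(insert j s) : Set (Fin t))) = insert j (↑s : Set (Fin t)))) ⟨i, hi⟩) = ⟨i, by simpa using hi⟩ from rfl]
          rw [Set.subtypeInsertEquivOption]
          simp [h]
      have hins : insert j s ∈ Smax := by
        rw [hSmax, Set.mem_setOf_eq, ← hcomp]
        exact hopt.comp e e.injective
      have hcard := hmax hins (by
        rw [Finset.card_insert_of_notMem hj]; omega)
      rw [Finset.card_insert_of_notMem hj] at hcard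
      omega
    have halg : IsAlgebraic (Algebra.adjoin (↥F)
        (Set.range (fun i : (↑s : Set (Fin t)) => ζ ↑i))) (ζ j) := by
      by_contra htr
      exact hnotindep ((hs.option_iff_transcendental (ζ j)).mpr htr)
    obtain ⟨P, hP0, hPev⟩ := halg
    have hsub : ∀ a : E, a ∈ Algebra.adjoin (↥F)
        (Set.range (fun i : (↑s : Set (Fin t)) => ζ ↑i)) → a ∈ L := by
      intro a ha
      induction ha using Algebra.adjoin_induction with
      | mem z hz => rw [hrange] at hz; exact Subfield.subset_closure (Or.inr hz)
      | algebraMap f => exact hFL f.2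
      | add a b _ _ ha hb => exact L.add_mem ha hb
      | mul a b _ _ ha hb => exact L.mul_mem ha hb
    have hinj : Function.Injective (algebraMap
        (↥(Algebra.adjoin (↥F) (Set.range (fun i : (↑s : Set (Fin t)) => ζ ↑i)))) E) :=
      Subtype.val_injective
    apply ostrowski hD hFL hLdiff hNNC (hFL (hζ j))
    refine ⟨P.map (algebraMap _ E), ?_, ?_, ?_⟩
    · rw [Ne, Polynomial.map_eq_zero_iff hinj]
      exact hP0
    · intro n
      rw [Polynomial.coeff_map]
      exact hsub _ (P.coeff n).2
    · rw [Polynomial.eval_map, ← Polynomial.aeval_def]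
      exact hPev
  have hLtop : L = ⊤ := by
    rw [eq_top_iff, ← htop, hLdef]
    apply Subfield.closure_le.mpr
    rintro z (hz | ⟨i, rfl⟩)
    · exact hFL hz
    · exact hmem i
  -- reindex to Fin s.card
  refine ⟨s.card, fun k => ζ ((s.equivFin.symm k : (↥s)) : Fin t), ?_, fun k => hζ _, ?_⟩
  · set e : Fin s.card ≃ (↑s : Set (Fin t)) :=
      s.equivFin.symm.trans (Equiv.subtypeEquivRight fun x => Finset.mem_coe.symm) with hedef
    have := hs.comp e e.injective
    exact this
  · have : Set.range (fun k => ζ ((s.equivFin.symm k : (↥s)) : Fin t)) = ζ '' ↑s := by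
      ext z
      constructor
      · rintro ⟨k, rfl⟩
        exact ⟨_, (s.equivFin.symm k).2, rfl⟩
      · rintro ⟨i, hi, rfl⟩
        exact ⟨s.equivFin ⟨i, hi⟩, by simp⟩
    rw [this, ← hLdef, hLtop]


end S10

/-- for an antiderivative extension `E = F(ζ₁,…,ζ_t)` (the ambient
field, `⊤`) of `F`, the fixed field of `G(E|F)` is exactly `F`. -/
theorem statement10 {E : Type*} [Field E] [CharZero E] (D : E → E) (hD : IsDeriv D)
    (F : Subfield E) (hF : IsDiffSubfield D F)
    (hNNC : ∀ x : E, D x = 0 → x ∈ F)  -- E is a no new constants extension of F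
    (t : ℕ) (ζ : Fin t → E) (hζ : ∀ i, D (ζ i) ∈ F)
    (htop : adjoinSF F (Set.range ζ) = ⊤) :
    {y : E | ∀ σ : E ≃+* E, IsDiffAut D F σ → σ y = y} = (F : Set E) := by
  apply Set.eq_of_subset_of_subset
  · intro y hy
    simp only [Set.mem_setOf_eq] at hy
    obtain ⟨r, x, hx, hxF, hxtop⟩ := S10.exists_indep_basis hD F hF hNNC t ζ hζ htop
    exact S10.fixed_in_F hD F hF r x hx hxF hxtop y hy
  · intro y hy σ hσ
    exact hσ.1 y hy
end

section
/- Let F be a differential field of characteristic zero and let E be an iterated antiderivative extension of F with normal tower E = E_m ⊃ E_{m−1} ⊃ ⋯ ⊃ E₁ ⊃ E₀ = F. Then every σ ∈ G(E|F) maps each Eᵢ into itself: σ(Eᵢ) ⊆ Eᵢ for all i. -/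
/-- let `E` (the ambient field, `⊤`) be an iterated antiderivative
extension of `F`, with normal tower `Eᵢ = adCl^[i] F` (iterated antiderivative
closures). Then every differential automorphism of `E` over `F` maps each `Eᵢ`
into itself. -/
theorem statement11 {E : Type*} [Field E] [CharZero E] (D : E → E) (hD : IsDeriv D)
    (F : Subfield E) (hF : IsDiffSubfield D F)
    (hIAE : IsIAE D F ⊤)
    (σ : E ≃+* E) (hσ : IsDiffAut D F σ) :
    ∀ i : ℕ, ∀ x ∈ (adCl D)^[i] F, σ x ∈ (adCl D)^[i] F := by
  intro i
  induction i with
  | zero => intro x hx; simpa [hσ.1 x hx] using hx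
  | succ n ih =>
    intro x hx
    rw [Function.iterate_succ_apply'] at hx ⊢
    set K := (adCl D)^[n] F with hK
    have hle : K ≤ adCl D K := by
      intro y hy
      exact Subfield.subset_closure (Or.inl hy)
    have hclos : Subfield.closure (↑K ∪ {x : E | D x ∈ K}) ≤
        (adCl D K).comap (σ : E →+* E) := by
      apply Subfield.closure_le.mpr
      rintro y (hy | hy)
      · exact hle (ih y hy)
      · have : D (σ y) ∈ K := by
          rw [← hσ.2 y]
          exact ih (D y) hy
        exact Subfield.subset_closure (Or.inr this)
    exact hclos hx
end

section
/- Let L = ℂ(z, ζ₁, ζ₂) be a differential field of characteristic zero, where z, ζ₁, ζ₂ are algebraically independent over ℂ, the derivation satisfies z′ = 1, ζ₁′ = 1/z, ζ₂′ = ζ₁′/ζ₁ = 1/(zζ₁), and the field of constants of L is ℂ (so L models ℂ(z, log z, log(log z)) with derivation d/dz). Then the only differential subfields of L containing ℂ are ℂ, ℂ(z), ℂ(z, ζ₁), and L; in particular the normal tower of L over ℂ is L ⊃ ℂ(z, ζ₁) ⊃ ℂ(z) ⊃ ℂ. -/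
section Proof12Aux

section Basic
variable {L : Type*} [Field L] {D : L → L} (hD : IsDeriv D)
include hD

theorem D_zero : D 0 = 0 := by
  have := hD.1 0 0; simp only [add_zero] at this
  exact add_eq_left.mp this.symm

theorem D_one : D 1 = 0 := by
  have := hD.2 1 1; simp only [mul_one, one_mul] at this
  exact add_eq_left.mp this.symm

theorem D_neg (x : L) : D (-x) = - D x := by
  have := hD.1 x (-x); rw [add_neg_cancel, D_zero hD] at this
  exact eq_neg_of_add_eq_zero_right this.symm

theorem D_sub (x y : L) : D (x - y) = D x - D y := by
  rw [sub_eq_add_neg, hD.1, D_neg hD]; ring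

theorem D_inv (x : L) (hx : x ≠ 0) : D x⁻¹ = - D x / x ^ 2 := by
  have h := hD.2 x x⁻¹
  rw [mul_inv_cancel₀ hx, D_one hD] at h
  have hinv : x * D x⁻¹ = - (D x * x⁻¹) := eq_neg_of_add_eq_zero_right h.symm
  have hx2 : x ^ 2 ≠ 0 := pow_ne_zero 2 hx
  rw [eq_div_iff hx2]
  calc D x⁻¹ * x ^ 2 = (x * D x⁻¹) * x := by ring
  _ = (- (D x * x⁻¹)) * x := by rw [hinv]
  _ = - D x * (x⁻¹ * x) := by ring
  _ = - D x := by rw [inv_mul_cancel₀ hx, mul_one]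

theorem D_div (x y : L) (hy : y ≠ 0) : D (x / y) = (D x * y - x * D y) / y ^ 2 := by
  rw [div_eq_mul_inv, hD.2, D_inv hD y hy]
  field_simp
  ring

theorem D_pow' (x : L) (n : ℕ) : D (x ^ (n + 1)) = (n + 1 : ℕ) * x ^ n * D x := by
  induction n with
  | zero => rw [pow_one, pow_zero]; push_cast; ring
  | succ n ih =>
    rw [pow_succ, hD.2, ih]
    push_cast; ring

end Basic

section Adjoin
variable {L : Type*} [Field L]

theorem adjoinSF_le {F : Subfield L} {S : Set L} {K : Subfield L} (hF : F ≤ K) (hS : S ⊆ K) :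
    adjoinSF F S ≤ K :=
  Subfield.closure_le.2 (Set.union_subset hF hS)

theorem le_adjoinSF (F : Subfield L) (S : Set L) : F ≤ adjoinSF F S :=
  fun x hx => Subfield.subset_closure (Set.mem_union_left _ hx)

theorem subset_adjoinSF (F : Subfield L) (S : Set L) : S ⊆ ↑(adjoinSF F S) :=
  fun x hx => Subfield.subset_closure (Set.mem_union_right _ hx)

theorem adjoinSF_assoc (F : Subfield L) (S T : Set L) :
    adjoinSF (adjoinSF F S) T = adjoinSF F (S ∪ T) := by
  apply le_antisymm
  · refine adjoinSF_le (adjoinSF_le (le_adjoinSF F _) ?_) ?_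
    · exact (Set.subset_union_left).trans (subset_adjoinSF F _)
    · exact (Set.subset_union_right).trans (subset_adjoinSF F _)
  · exact adjoinSF_le ((le_adjoinSF F S).trans (le_adjoinSF _ T))
      (Set.union_subset
        ((subset_adjoinSF F S).trans (SetLike.coe_subset_coe.2 (le_adjoinSF _ T)))
        (subset_adjoinSF _ T))

theorem adjoinSF_mono (F : Subfield L) {S T : Set L} (h : S ⊆ T) :
    adjoinSF F S ≤ adjoinSF F T :=
  adjoinSF_le (le_adjoinSF F T) (h.trans (subset_adjoinSF F T))

/-- A differential subfield criterion for adjoining. -/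
theorem adjoinSF_diff {D : L → L} (hD : IsDeriv D) {F : Subfield L} (hF : IsDiffSubfield D F)
    {S : Set L} (hS : ∀ s ∈ S, D s ∈ adjoinSF F S) : IsDiffSubfield D (adjoinSF F S) := by
  set M : Subfield L :=
    { carrier := {x | x ∈ adjoinSF F S ∧ D x ∈ adjoinSF F S}
      zero_mem' := ⟨Subfield.zero_mem _, by rw [D_zero hD]; exact Subfield.zero_mem _⟩
      one_mem' := ⟨Subfield.one_mem _, by rw [D_one hD]; exact Subfield.zero_mem _⟩
      add_mem' := fun ha hb => ⟨Subfield.add_mem _ ha.1 hb.1, by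
        rw [hD.1]
        exact Subfield.add_mem _ ha.2 hb.2⟩
      mul_mem' := fun ha hb => ⟨Subfield.mul_mem _ ha.1 hb.1, by
        rw [hD.2]
        exact Subfield.add_mem _ (Subfield.mul_mem _ ha.2 hb.1)
          (Subfield.mul_mem _ ha.1 hb.2)⟩
      neg_mem' := fun ha => ⟨Subfield.neg_mem _ ha.1, by
        rw [D_neg hD]
        exact Subfield.neg_mem _ ha.2⟩
      inv_mem' := by
        intro x hx
        refine ⟨Subfield.inv_mem _ hx.1, ?_⟩
        by_cases h0 : x = 0
        · subst h0; rw [inv_zero, D_zero hD]; exact Subfield.zero_mem _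
        · rw [D_inv hD x h0]
          exact Subfield.div_mem _ (Subfield.neg_mem _ hx.2)
            (Subfield.pow_mem _ hx.1 2) } with hM
  have hle : adjoinSF F S ≤ M := by
    apply adjoinSF_le
    · intro x hx
      exact ⟨le_adjoinSF F S hx, le_adjoinSF F S (hF x hx)⟩
    · intro s hs
      exact ⟨subset_adjoinSF F S hs, hS s hs⟩
  intro x hx
  exact (hle hx).2

end Adjoin

section Poly
open Polynomial

variable {L : Type*} [Field L] {D : L → L}

/-- The restricted derivation on a differential subfield. -/
def Dc (D : L → L) {K : Subfield L} (hK : IsDiffSubfield D K) (a : K) : K :=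
  ⟨D a, hK a a.2⟩

@[simp] theorem Dc_coe {K : Subfield L} (hK : IsDiffSubfield D K) (a : K) :
    ((Dc D hK a : K) : L) = D a := rfl

theorem Dc_zero (hD : IsDeriv D) {K : Subfield L} (hK : IsDiffSubfield D K) :
    Dc D hK 0 = 0 := by
  apply Subtype.ext; simp [D_zero hD]

theorem Dc_one (hD : IsDeriv D) {K : Subfield L} (hK : IsDiffSubfield D K) :
    Dc D hK 1 = 0 := by
  apply Subtype.ext; simp [D_one hD]

theorem Dc_add (hD : IsDeriv D) {K : Subfield L} (hK : IsDiffSubfield D K) (a b : K) :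
    Dc D hK (a + b) = Dc D hK a + Dc D hK b := by
  apply Subtype.ext; push_cast [Dc_coe]; exact hD.1 a b

/-- Coefficientwise application of the derivation to a polynomial. -/
noncomputable def mapD (hD : IsDeriv D) {K : Subfield L} (hK : IsDiffSubfield D K)
    (p : Polynomial K) : Polynomial K :=
  ⟨⟨p.toFinsupp.coeff.mapRange (Dc D hK) (Dc_zero hD hK)⟩⟩

@[simp] theorem coeff_mapD (hD : IsDeriv D) {K : Subfield L} (hK : IsDiffSubfield D K)
    (p : Polynomial K) (n : ℕ) : (mapD hD hK p).coeff n = Dc D hK (p.coeff n) := by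
  rcases p with ⟨p⟩
  simp [mapD, coeff, Finsupp.mapRange_apply]

theorem mapD_add (hD : IsDeriv D) {K : Subfield L} (hK : IsDiffSubfield D K)
    (p q : Polynomial K) : mapD hD hK (p + q) = mapD hD hK p + mapD hD hK q := by
  ext n
  simp [coeff_mapD, Dc_add hD hK]

theorem mapD_monomial (hD : IsDeriv D) {K : Subfield L} (hK : IsDiffSubfield D K)
    (n : ℕ) (a : K) : mapD hD hK (monomial n a) = monomial n (Dc D hK a) := by
  ext m
  by_cases h : m = n
  · subst h; simp [coeff_mapD, coeff_monomial]
  · simp [coeff_mapD, coeff_monomial, Ne.symm h, h, Dc_zero hD hK]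

theorem natDegree_mapD_le (hD : IsDeriv D) {K : Subfield L} (hK : IsDiffSubfield D K)
    (p : Polynomial K) : (mapD hD hK p).natDegree ≤ p.natDegree := by
  apply natDegree_le_iff_coeff_eq_zero.2
  intro n hn
  rw [coeff_mapD, coeff_eq_zero_of_natDegree_lt hn, Dc_zero hD hK]

/-- The chain rule for polynomial expressions. -/
theorem chainD (hD : IsDeriv D) {K : Subfield L} (hK : IsDiffSubfield D K)
    (t : L) (p : Polynomial K) :
    D (aeval t p) = aeval t (mapD hD hK p) + aeval t (derivative p) * D t := by
  induction p using Polynomial.induction_on' with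
  | add p q hp hq =>
    rw [map_add, hD.1, hp, hq, mapD_add hD hK, derivative_add, map_add, map_add]
    ring
  | monomial n a =>
    rw [aeval_monomial, mapD_monomial hD hK, aeval_monomial]
    have halg : ∀ b : K, algebraMap K L b = (b : L) := fun b => rfl
    rw [derivative_monomial, aeval_monomial, halg, halg, halg, hD.2]
    rcases n with _ | m
    · simp [D_one hD, Dc_coe]
    · rw [D_pow' hD t m, Nat.succ_sub_one]
      simp only [Dc_coe]
      push_cast
      ring

end Poly

section Main
open Polynomial

variable {L : Type*} [Field L] {D : L → L}

theorem algebraMap_SF (F : Subfield L) (a : F) : algebraMap F L a = ↑a := rfl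

theorem auxA {R : Type*} [CommRing R] (g p a q b : R) :
    g * p * a + g * q * b = g * (a * p + b * q) := by ring

theorem auxB {R : Type*} [CommRing R] (u c p ci v q : R) :
    u * c * (p * ci) + v * c * (q * ci) = (u * p + v * q) * (c * ci) := by ring

theorem auxC {R : Type*} [CommRing R] (a b c d e : R) :
    (a + b) + (c + d) * e = (a + c * e) + (b + d * e) := by ring

/-- `t` is transcendental over the subfield `F`. -/
def Tr (F : Subfield L) (t : L) : Prop :=
  ∀ p : Polynomial F, Polynomial.aeval t p = 0 → p = 0

theorem Tr.aeval_inj {F : Subfield L} {t : L} (htr : Tr F t) {p q : Polynomial F}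
    (h : aeval t p = aeval t q) : p = q := by
  have := htr (p - q) (by rw [map_sub, h, sub_self])
  exact sub_eq_zero.mp this

theorem Tr.not_mem {F : Subfield L} {t : L} (htr : Tr F t) : t ∉ F := by
  intro ht
  have h := htr (X - C ⟨t, ht⟩) (by
    rw [map_sub, aeval_X, aeval_C]
    exact sub_eq_zero.mpr rfl)
  exact X_sub_C_ne_zero (⟨t, ht⟩ : F) h

theorem aeval_mem_adjoinSF (F : Subfield L) (t : L) (p : Polynomial F) :
    aeval t p ∈ adjoinSF F {t} := by
  induction p using Polynomial.induction_on' with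
  | add p q hp hq => rw [map_add]; exact Subfield.add_mem _ hp hq
  | monomial n a =>
    rw [aeval_monomial]
    exact Subfield.mul_mem _ (le_adjoinSF F _ a.2)
      (Subfield.pow_mem _ (subset_adjoinSF F {t} rfl) n)

theorem mem_adjoinSF_singleton {F : Subfield L} {t x : L} :
    x ∈ adjoinSF F {t} ↔
      ∃ p q : Polynomial F, aeval t q ≠ 0 ∧ x * aeval t q = aeval t p := by
  constructor
  · intro hx
    set M : Subfield L :=
      { carrier := {y | ∃ p q : Polynomial F, aeval t q ≠ 0 ∧ y * aeval t q = aeval t p}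
        zero_mem' := ⟨0, 1, by simp, by simp⟩
        one_mem' := ⟨1, 1, by simp, by simp⟩
        add_mem' := by
          rintro a b ⟨p1, q1, hq1, h1⟩ ⟨p2, q2, hq2, h2⟩
          refine ⟨p1 * q2 + p2 * q1, q1 * q2, by rw [map_mul]; exact mul_ne_zero hq1 hq2, ?_⟩
          rw [map_add, map_mul, map_mul, map_mul, ← h1, ← h2]; ring
        mul_mem' := by
          rintro a b ⟨p1, q1, hq1, h1⟩ ⟨p2, q2, hq2, h2⟩
          refine ⟨p1 * p2, q1 * q2, by rw [map_mul]; exact mul_ne_zero hq1 hq2, ?_⟩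
          rw [map_mul, map_mul, ← h1, ← h2]; ring
        neg_mem' := by
          rintro a ⟨p, q, hq, h⟩
          exact ⟨-p, q, hq, by rw [map_neg, ← h]; ring⟩
        inv_mem' := by
          rintro a ⟨p, q, hq, h⟩
          by_cases ha : a = 0
          · subst ha; exact ⟨0, 1, by simp, by simp⟩
          · have hp : aeval t p ≠ 0 := by
              rw [← h]; exact mul_ne_zero ha hq
            exact ⟨q, p, hp, by
              rw [← h]
              field_simp⟩ } with hM
    have hle : adjoinSF F {t} ≤ M := by
      apply adjoinSF_le
      · intro a ha
        exact ⟨C ⟨a, ha⟩, 1, by simp, by rw [map_one, mul_one, aeval_C, algebraMap_SF]⟩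
      · intro s hs
        rcases hs with rfl
        exact ⟨X, 1, by simp, by rw [map_one, mul_one, aeval_X]⟩
    exact hle hx
  · rintro ⟨p, q, hq, h⟩
    have : x = aeval t p / aeval t q := by
      field_simp [← h]
      exact h
    rw [this]
    exact Subfield.div_mem _ (aeval_mem_adjoinSF F t p) (aeval_mem_adjoinSF F t q)

set_option maxHeartbeats 2000000 in
/-- Reduced representation of elements of `F(t)`. -/
theorem repr_coprime {F : Subfield L} {t x : L} (hx : x ∈ adjoinSF F {t}) :
    ∃ p q : Polynomial F, IsCoprime p q ∧ q.Monic ∧ aeval t q ≠ 0 ∧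
      x * aeval t q = aeval t p := by
  classical
  obtain ⟨p0, q0, hq0, h0⟩ := mem_adjoinSF_singleton.mp hx
  have hq0' : q0 ≠ 0 := fun h => hq0 (by rw [h, map_zero])
  set g := EuclideanDomain.gcd p0 q0 with hg
  have hgd1 : g ∣ p0 := EuclideanDomain.gcd_dvd_left p0 q0
  have hgd2 : g ∣ q0 := EuclideanDomain.gcd_dvd_right p0 q0
  have hgne : g ≠ 0 := fun h => hq0' (eq_zero_of_zero_dvd (h ▸ hgd2))
  obtain ⟨p1, hp0⟩ := hgd1
  obtain ⟨q1, hq0eq⟩ := hgd2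
  have hbez : g = p0 * EuclideanDomain.gcdA p0 q0 + q0 * EuclideanDomain.gcdB p0 q0 :=
    EuclideanDomain.gcd_eq_gcd_ab p0 q0
  have hcop : IsCoprime p1 q1 := by
    refine ⟨EuclideanDomain.gcdA p0 q0, EuclideanDomain.gcdB p0 q0, ?_⟩
    have h2 : g * 1 = g * (EuclideanDomain.gcdA p0 q0 * p1 + EuclideanDomain.gcdB p0 q0 * q1) := by
      rw [mul_one]
      nth_rewrite 1 [hbez]
      rw [hp0, hq0eq]
      exact auxA _ _ _ _ _
    exact (mul_left_cancel₀ hgne h2).symm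
  have hgval : aeval t g ≠ 0 := by
    intro h
    apply hq0
    rw [hq0eq, map_mul, h, zero_mul]
  have hq1val : aeval t q1 ≠ 0 := by
    intro h
    apply hq0
    rw [hq0eq, map_mul, h, mul_zero]
  have h1 : x * aeval t q1 = aeval t p1 := by
    have := h0
    rw [hq0eq, hp0, map_mul, map_mul] at this
    have h2 : aeval t g * (x * aeval t q1) = aeval t g * aeval t p1 := by
      rw [← this]; ring
    exact mul_left_cancel₀ hgval h2
  have hq1ne : q1 ≠ 0 := fun h => hq1val (by rw [h, map_zero])
  set c := q1.leadingCoeff with hc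
  have hcne : c ≠ 0 := leadingCoeff_ne_zero.mpr hq1ne
  refine ⟨p1 * C c⁻¹, q1 * C c⁻¹, ?_, monic_mul_leadingCoeff_inv hq1ne, ?_, ?_⟩
  · obtain ⟨u, v, huv⟩ := hcop
    exact ⟨u * C c, v * C c, by
      rw [auxB, ← C_mul, mul_inv_cancel₀ hcne, map_one, mul_one, huv]⟩
  · rw [map_mul, aeval_C]
    apply mul_ne_zero hq1val
    intro h
    have h2 : ((c⁻¹ : F) : L) = 0 := h
    have h3 : (c⁻¹ : F) = 0 := Subtype.ext h2
    exact hcne (inv_eq_zero.mp h3)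
  · rw [map_mul, map_mul, aeval_C, ← h1]; ring

variable (hD : IsDeriv D)
include hD

/-- The induced derivation on `F[X]` when `X` corresponds to `t` with `D t = w ∈ F`. -/
noncomputable def dpoly {F : Subfield L} (hF : IsDiffSubfield D F) (w : F)
    (p : Polynomial F) : Polynomial F :=
  mapD hD hF p + derivative p * C w

theorem D_aeval_dpoly {F : Subfield L} (hF : IsDiffSubfield D F) {t : L} {w : F}
    (hw : D t = ↑w) (p : Polynomial F) :
    D (aeval t p) = aeval t (dpoly hD hF w p) := by
  rw [dpoly, map_add, map_mul, aeval_C, chainD hD hF t p, hw]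
  rfl

theorem dpoly_add {F : Subfield L} (hF : IsDiffSubfield D F) (w : F) (p q : Polynomial F) :
    dpoly hD hF w (p + q) = dpoly hD hF w p + dpoly hD hF w q := by
  rw [dpoly, dpoly, dpoly, mapD_add hD hF, derivative_add]
  exact auxC _ _ _ _ _

theorem dpoly_mul {F : Subfield L} (hF : IsDiffSubfield D F) {t : L} (htr : Tr F t) {w : F}
    (hw : D t = ↑w) (p q : Polynomial F) :
    dpoly hD hF w (p * q) = dpoly hD hF w p * q + p * dpoly hD hF w q := by
  apply htr.aeval_inj
  calc aeval t (dpoly hD hF w (p * q)) = D (aeval t (p * q)) :=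
        (D_aeval_dpoly hD hF hw (p * q)).symm
    _ = D (aeval t p * aeval t q) := by rw [map_mul]
    _ = D (aeval t p) * aeval t q + aeval t p * D (aeval t q) := hD.2 _ _
    _ = aeval t (dpoly hD hF w p * q + p * dpoly hD hF w q) := by
        rw [D_aeval_dpoly hD hF hw, D_aeval_dpoly hD hF hw, map_add, map_mul, map_mul]

theorem dpoly_degree_lt {F : Subfield L} (hF : IsDiffSubfield D F) (w : F)
    {q : Polynomial F} (hq : q.Monic) (hdeg : 1 ≤ q.natDegree) :
    (dpoly hD hF w q).degree < q.degree := by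
  have hqne : q ≠ 0 := hq.ne_zero
  rw [degree_eq_natDegree hqne]
  have : (dpoly hD hF w q).degree < (q.natDegree : WithBot ℕ) := by
    rw [degree_lt_iff_coeff_zero]
    intro m hm
    rw [dpoly, coeff_add, coeff_mapD, coeff_mul_C, coeff_derivative]
    rcases eq_or_lt_of_le hm with h | h
    · have h1 : q.coeff m = 1 := by rw [← h]; exact hq.coeff_natDegree
      have h2 : q.coeff (m + 1) = 0 :=
        coeff_eq_zero_of_natDegree_lt (by omega)
      rw [h1, h2, Dc_one hD hF]
      simp
    · have h1 : q.coeff m = 0 := coeff_eq_zero_of_natDegree_lt (by omega)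
      have h2 : q.coeff (m + 1) = 0 := coeff_eq_zero_of_natDegree_lt (by omega)
      rw [h1, h2, Dc_zero hD hF]
      simp
  exact this

theorem D_natCast (n : ℕ) : D (n : L) = 0 := by
  induction n with
  | zero => exact_mod_cast D_zero hD
  | succ n ih =>
    push_cast
    rw [hD.1, ih, D_one hD, add_zero]

/-- KEY LEMMA Z : an antiderivative-type element algebraic over a differential
subfield belongs to it. -/
theorem lemZ {K : Subfield L} (hK : IsDiffSubfield D K)
    (hchar : ∀ n : ℕ, n ≠ 0 → (n : L) ≠ 0)
    (C0 : Subfield L) (hC0K : C0 ≤ K) (hconst : ∀ x : L, D x = 0 → x ∈ C0)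
    {t : L} (halg : ∃ p : Polynomial K, p ≠ 0 ∧ aeval t p = 0)
    {w : K} (hw : D t = ↑w) : t ∈ K := by
  have halg' : IsAlgebraic K t := halg
  have hint : IsIntegral K t := halg'.isIntegral
  set p := minpoly K t with hp
  have hmon : p.Monic := minpoly.monic hint
  have hpt : aeval t p = 0 := minpoly.aeval K t
  have hn1 : 1 ≤ p.natDegree := minpoly.natDegree_pos hint
  set s := dpoly hD hK w p with hs
  have hst : aeval t s = 0 := by
    rw [← D_aeval_dpoly hD hK hw, hpt, D_zero hD]
  have hs0 : s = 0 := by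
    by_contra hne
    have h1 := minpoly.degree_le_of_ne_zero K t hne hst
    rw [← hp] at h1
    have hlt := dpoly_degree_lt hD hK w hmon hn1
    exact absurd (lt_of_le_of_lt h1 hlt) (lt_irrefl _)
  -- coefficient n-1 of s vanishes
  set n := p.natDegree with hn
  have hcoeff : Dc D hK (p.coeff (n - 1)) + p.coeff n * (((n - 1 : ℕ) : K) + 1) * w = 0 := by
    have h2 := congrArg (fun r => Polynomial.coeff r (n - 1)) hs0
    simp only [coeff_zero] at h2
    rw [hs, dpoly, coeff_add, coeff_mapD, coeff_mul_C, coeff_derivative,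
      Nat.sub_add_cancel hn1] at h2
    exact h2
  have hcast : ((n - 1 : ℕ) : K) + 1 = (n : K) := by
    exact_mod_cast congrArg (Nat.cast : ℕ → K) (Nat.sub_add_cancel hn1)
  rw [hcast] at hcoeff
  have hlead : p.coeff n = 1 := hmon.coeff_natDegree
  rw [hlead, one_mul] at hcoeff
  -- translate to L
  have hcoeffL : D ((p.coeff (n - 1) : L)) + (n : L) * (w : L) = 0 := by
    have := congrArg (fun a : K => (a : L)) hcoeff
    push_cast at this
    rw [← Dc_coe hK (p.coeff (n-1))]
    exact_mod_cast this
  have hDnt : D ((p.coeff (n - 1) : L) + (n : L) * t) = 0 := by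
    rw [hD.1, hD.2, D_natCast hD n, hw]
    have : (↑(p.coeff (n - 1)) : L) = ↑(p.coeff (n-1)) := rfl
    calc D (↑(p.coeff (n - 1)) : L) + (0 * t + ↑n * ↑w) 
        = D ((p.coeff (n - 1) : L)) + (n : L) * (w : L) := by ring
      _ = 0 := hcoeffL
  have hmem : (p.coeff (n - 1) : L) + (n : L) * t ∈ K := hC0K (hconst _ hDnt)
  have hnL : (n : L) ≠ 0 := hchar n (by omega)
  have hnK : (n : L) ∈ K := by exact_mod_cast natCast_mem K n
  have h1 : (n : L) * t ∈ K := by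
    have := Subfield.sub_mem K hmem (p.coeff (n - 1)).2
    simpa using this
  have : t = ((n : L))⁻¹ * ((n : L) * t) := by field_simp
  rw [this]
  exact Subfield.mul_mem _ (Subfield.inv_mem _ hnK) h1

end Main

section MainTwo
open Polynomial

variable {L : Type*} [Field L] {D : L → L}

theorem auxD {R : Type*} [CommRing R] {dp q cr p dq : R} (h : dp * q = cr * q ^ 2 + p * dq) :
    p * dq = q * (dp - cr * q) := by linear_combination -h

theorem auxE {R : Type*} [CommRing R] (n : ℕ) (xx dp m cfg p dm ck w : R) :
    xx * dp * (xx ^ (n+1) * m) -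
        (cfg * (xx ^ (n+1) * m) ^ 2 + xx * p * (ck * xx ^ n * w * m + xx ^ (n+1) * dm))
      = xx ^ (n+1) *
        (xx * dp * m - (xx ^ (n+1) * (cfg * m ^ 2) + ck * w * p * m + xx * p * dm)) := by
  ring

/-- `t` is algebraic over any subfield containing `F` and an element
of `F(t)` that is not in `F`. -/
theorem alg_of_mem_adjoin {F : Subfield L} {t u : L} (hu : u ∈ adjoinSF F {t}) (huF : u ∉ F)
    {M : Subfield L} (hFM : F ≤ M) (huM : u ∈ M) :
    ∃ P : Polynomial M, P ≠ 0 ∧ aeval t P = 0 := by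
  obtain ⟨p, q, hqv, heq⟩ := mem_adjoinSF_singleton.mp hu
  have hq0 : q ≠ 0 := fun h => hqv (by rw [h, map_zero])
  set j : F →+* M := Subfield.inclusion hFM with hj
  have hjc : ∀ a : F, ((j a : M) : L) = ↑a := fun a => rfl
  have haev : ∀ s : Polynomial F, aeval t (s.map j) = aeval t s := by
    intro s
    have hcomp : (algebraMap M L).comp j = algebraMap F L := RingHom.ext fun a => rfl
    rw [aeval_def, aeval_def, eval₂_map, hcomp]
  refine ⟨p.map j - C ⟨u, huM⟩ * q.map j, ?_, ?_⟩
  · intro h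
    have h3 := congrArg (fun s => Polynomial.coeff s q.natDegree) h
    simp only [coeff_sub, coeff_zero, coeff_C_mul, coeff_map] at h3
    have h4 : j (p.coeff q.natDegree) = ⟨u, huM⟩ * j (q.coeff q.natDegree) :=
      sub_eq_zero.mp h3
    have h5 := congrArg (fun a : M => (a : L)) h4
    simp only [hjc] at h5
    push_cast at h5
    have hqc : (q.coeff q.natDegree : L) ≠ 0 := by
      intro hz
      exact leadingCoeff_ne_zero.mpr hq0 (Subtype.ext hz)
    have hu2 : u = ↑(p.coeff q.natDegree) / ↑(q.coeff q.natDegree) := by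
      rw [eq_div_iff hqc]
      rw [hjc] at h5
      exact h5.symm
    apply huF
    rw [hu2]
    exact Subfield.div_mem F (p.coeff q.natDegree).2 (q.coeff q.natDegree).2
  · rw [map_sub, map_mul, aeval_C, haev, haev]
    have : (algebraMap M L) ⟨u, huM⟩ = u := rfl
    rw [this, ← heq]
    ring

variable (hD : IsDeriv D)
include hD

theorem dpoly_coeff {F : Subfield L} (hF : IsDiffSubfield D F) (w : F) (p : Polynomial F)
    (n : ℕ) :
    (dpoly hD hF w p).coeff n = Dc D hF (p.coeff n) + p.coeff (n + 1) * ((n : F) + 1) * w := by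
  rw [dpoly, coeff_add, coeff_mapD, coeff_mul_C, coeff_derivative]

theorem dpoly_one {F : Subfield L} (hF : IsDiffSubfield D F) (w : F) :
    dpoly hD hF w 1 = 0 := by
  ext n
  rw [dpoly_coeff hD hF, coeff_zero, coeff_one, coeff_one]
  rcases n with _ | n
  · rw [if_pos rfl, if_neg (Nat.one_ne_zero), Dc_one hD hF, zero_mul, zero_mul, add_zero]
  · rw [if_neg (Nat.succ_ne_zero n), if_neg (Nat.succ_ne_zero (n+1)), Dc_zero hD hF,
      zero_mul, zero_mul, add_zero]

theorem dpoly_X_pow {F : Subfield L} (hF : IsDiffSubfield D F) (w : F) (n : ℕ) :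
    dpoly hD hF w (X ^ (n + 1)) = C ((n : F) + 1) * X ^ n * C w := by
  rw [dpoly, derivative_X_pow]
  have h1 : mapD hD hF (X ^ (n + 1)) = 0 := by
    have h2 : (X : Polynomial F) ^ (n + 1) = monomial (n + 1) 1 := by
      rw [← C_mul_X_pow_eq_monomial, map_one, one_mul]
    rw [h2, mapD_monomial hD hF, Dc_one hD hF, monomial_zero_right]
  rw [h1, zero_add, Nat.add_sub_cancel]
  have h2 : ((n + 1 : ℕ) : F) = (n : F) + 1 := by push_cast; ring
  rw [h2]

/-- LEMMA L1 -/
theorem lemL1 {F : Subfield L} (hF : IsDiffSubfield D F) {t : L} (htr : Tr F t) {w : F}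
    (hw : D t = ↑w) (hchar : ∀ n : ℕ, n ≠ 0 → (n : L) ≠ 0)
    {C0 : Subfield L} (hC0F : C0 ≤ F) (hconst : ∀ y : L, D y = 0 → y ∈ C0)
    {x : L} (hx : x ∈ adjoinSF F {t}) {r : F} (hDx : D x = ↑r) :
    ∃ c a : L, c ∈ C0 ∧ a ∈ F ∧ x = c * t + a := by
  obtain ⟨p, q, hcop, hmon, hqv, heq⟩ := repr_coprime hx
  have hid : dpoly hD hF w p * q = C r * q ^ 2 + p * dpoly hD hF w q := by
    apply htr.aeval_inj
    simp only [map_mul, map_add, map_pow, aeval_C, algebraMap_SF]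
    rw [← D_aeval_dpoly hD hF hw, ← D_aeval_dpoly hD hF hw]
    have hDp : D (aeval t p) = ↑r * aeval t q + x * D (aeval t q) := by
      calc D (aeval t p) = D (x * aeval t q) := by rw [heq]
        _ = D x * aeval t q + x * D (aeval t q) := hD.2 _ _
        _ = ↑r * aeval t q + x * D (aeval t q) := by rw [hDx]
    rw [hDp, ← heq]
    ring
  have hdvd : q ∣ dpoly hD hF w q := by
    have h1 : q ∣ p * dpoly hD hF w q := ⟨dpoly hD hF w p - C r * q, auxD hid⟩
    exact (hcop.symm).dvd_of_dvd_mul_left h1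
  have hq1 : q = 1 := by
    by_contra hq1
    have hdeg : 1 ≤ q.natDegree := by
      rcases Nat.eq_zero_or_pos q.natDegree with h | h
      · exact absurd (hmon.natDegree_eq_zero.mp h) hq1
      · exact h
    have hz : dpoly hD hF w q = 0 :=
      eq_zero_of_dvd_of_degree_lt hdvd (dpoly_degree_lt hD hF w hmon hdeg)
    have he : D (aeval t q) = 0 := by
      rw [D_aeval_dpoly hD hF hw, hz, map_zero]
    have heF : aeval t q ∈ F := hC0F (hconst _ he)
    have h6 := htr (q - C ⟨aeval t q, heF⟩) (by
      rw [map_sub, aeval_C, algebraMap_SF, sub_self])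
    have hqc : q = C ⟨aeval t q, heF⟩ := sub_eq_zero.mp h6
    have : q.natDegree = 0 := by rw [hqc, natDegree_C]
    omega
  subst hq1
  rw [map_one, mul_one] at heq
  simp only [dpoly_one hD hF, mul_one, one_pow, mul_zero, add_zero] at hid
  -- now aeval t p = x and dpoly p = C r
  have hm : p.natDegree ≤ 1 := by
    by_contra hm
    push_neg at hm
    set m := p.natDegree with hmdef
    have hm1 : 1 ≤ m := by omega
    have hp0 : p ≠ 0 := by
      intro h
      rw [h, natDegree_zero] at hmdef
      omega
    have hcm : Dc D hF (p.coeff m) = 0 := by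
      have h2 := congrArg (fun s => Polynomial.coeff s m) hid
      rw [dpoly_coeff hD hF, coeff_C, if_neg (by omega : ¬ m = 0)] at h2
      rw [hmdef, coeff_natDegree_succ_eq_zero, zero_mul, zero_mul, add_zero] at h2
      rw [hmdef]
      exact h2
    have hc1 : Dc D hF (p.coeff (m - 1)) + p.coeff m * (((m - 1 : ℕ) : F) + 1) * w = 0 := by
      have h2 := congrArg (fun s => Polynomial.coeff s (m - 1)) hid
      rw [dpoly_coeff hD hF, coeff_C, if_neg (by omega : ¬ m - 1 = 0),
        Nat.sub_add_cancel hm1] at h2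
      exact h2
    have hcast : ((m - 1 : ℕ) : F) + 1 = (m : F) := by
      exact_mod_cast congrArg (Nat.cast : ℕ → F) (Nat.sub_add_cancel hm1)
    rw [hcast] at hc1
    have hLm : D ((p.coeff m : L)) = 0 := by
      rw [← Dc_coe hF, hcm]
      rfl
    have hL1 : D ((p.coeff (m - 1) : L)) + (p.coeff m : L) * (m : L) * (w : L) = 0 := by
      have h5 := congrArg (fun a : F => (a : L)) hc1
      push_cast at h5
      rw [← Dc_coe hF]
      exact_mod_cast h5
    have hDy : D ((p.coeff (m - 1) : L) + (p.coeff m : L) * (m : L) * t) = 0 := by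
      rw [hD.1, hD.2, hD.2, hLm, D_natCast hD, hw]
      calc D ((p.coeff (m-1) : L)) + ((0 * ↑m + ↑(p.coeff m) * 0) * t + ↑(p.coeff m) * ↑m * ↑w)
          = D ((p.coeff (m - 1) : L)) + (p.coeff m : L) * (m : L) * (w : L) := by ring
        _ = 0 := hL1
    have hyF : (p.coeff (m - 1) : L) + (p.coeff m : L) * (m : L) * t ∈ F :=
      hC0F (hconst _ hDy)
    have hpm : (p.coeff m : L) ≠ 0 := by
      intro hz
      exact leadingCoeff_ne_zero.mpr hp0 (Subtype.ext hz)
    have hne : (p.coeff m : L) * (m : L) ≠ 0 :=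
      mul_ne_zero hpm (hchar m (by omega))
    have htF : t ∈ F := by
      have h7 : (p.coeff m : L) * (m : L) * t ∈ F := by
        have := Subfield.sub_mem F hyF (p.coeff (m - 1)).2
        simpa using this
      have h8 : t = ((p.coeff m : L) * (m : L))⁻¹ * ((p.coeff m : L) * (m : L) * t) := by
        rw [← mul_assoc, inv_mul_cancel₀ hne, one_mul]
      rw [h8]
      refine Subfield.mul_mem F (Subfield.inv_mem F ?_) h7
      exact Subfield.mul_mem F (p.coeff m).2 (by exact_mod_cast natCast_mem F m)
    exact htr.not_mem htF
  -- conclusion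
  have hc1 : Dc D hF (p.coeff 1) = 0 := by
    have h2 := congrArg (fun s => Polynomial.coeff s 1) hid
    rw [dpoly_coeff hD hF, coeff_C, if_neg (by omega : ¬ (1:ℕ) = 0)] at h2
    rw [coeff_eq_zero_of_natDegree_lt (by omega : p.natDegree < 2)] at h2
    simpa using h2
  refine ⟨(p.coeff 1 : L), (p.coeff 0 : L), ?_, (p.coeff 0).2, ?_⟩
  · apply hconst
    rw [← Dc_coe hF, hc1]
    rfl
  · rw [heq]
    conv_lhs => rw [eq_X_add_C_of_natDegree_le_one hm]
    rw [map_add, map_mul, aeval_C, aeval_X, aeval_C, algebraMap_SF, algebraMap_SF]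

/-- LEMMA L2 -/
theorem lemL2 {F : Subfield L} (hF : IsDiffSubfield D F) {t : L} (htr : Tr F t) {w : F}
    (hw : D t = ↑w) (hw0 : (w : L) ≠ 0) (hchar : ∀ n : ℕ, n ≠ 0 → (n : L) ≠ 0)
    {x : L} (hx : x ∈ adjoinSF F {t}) {f g : F} (hDx : D x = ↑f + ↑g * t⁻¹) :
    (g : L) = 0 := by
  by_contra hg
  have hgF : g ≠ 0 := fun h => hg (by rw [h]; rfl)
  have ht0 : t ≠ 0 := fun h => hw0 (by rw [← hw, h, D_zero hD])
  obtain ⟨p, q, hcop, hmon, hqv, heq⟩ := repr_coprime hx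
  have hq0 : q ≠ 0 := hmon.ne_zero
  have hid : X * dpoly hD hF w p * q = (C f * X + C g) * q ^ 2 + X * p * dpoly hD hF w q := by
    apply htr.aeval_inj
    simp only [map_mul, map_add, map_pow, aeval_C, aeval_X, algebraMap_SF]
    rw [← D_aeval_dpoly hD hF hw, ← D_aeval_dpoly hD hF hw]
    have hDp : D (aeval t p) = (↑f + ↑g * t⁻¹) * aeval t q + x * D (aeval t q) := by
      calc D (aeval t p) = D (x * aeval t q) := by rw [heq]
        _ = D x * aeval t q + x * D (aeval t q) := hD.2 _ _
        _ = (↑f + ↑g * t⁻¹) * aeval t q + x * D (aeval t q) := by rw [hDx]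
    rw [hDp, ← heq]
    field_simp
  by_cases hq00 : q.eval 0 = 0
  · -- X divides q
    have hXq : X ∣ q := X_dvd_iff.mpr (by rw [coeff_zero_eq_eval_zero]; exact hq00)
    have hXp : ¬ X ∣ p := fun hd => not_isUnit_X (hcop.isUnit_of_dvd' hd hXq)
    have hp00 : p.eval 0 ≠ 0 := by
      rw [← coeff_zero_eq_eval_zero]
      exact fun h => hXp (X_dvd_iff.mpr h)
    set k := rootMultiplicity 0 q with hk
    have hkpos : 0 < k := (rootMultiplicity_pos hq0).mpr hq00
    have hqm : X ^ k * (q /ₘ X ^ k) = q := by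
      have h1 := pow_mul_divByMonic_rootMultiplicity_eq q 0
      rw [C_0, sub_zero] at h1
      exact h1
    have hm0 : Polynomial.eval 0 (q /ₘ X ^ k) ≠ 0 := by
      have h1 := eval_divByMonic_pow_rootMultiplicity_ne_zero 0 hq0
      rw [C_0, sub_zero] at h1
      exact h1
    set m := q /ₘ X ^ k with hmdef
    obtain ⟨k', hk'⟩ : ∃ k', k = k' + 1 := ⟨k - 1, by omega⟩
    rw [hk'] at hqm
    have hsub := hid
    rw [← hqm, dpoly_mul hD hF htr hw, dpoly_X_pow hD hF w k'] at hsub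
    have hfac : (X : Polynomial F) ^ (k'+1) *
        (X * dpoly hD hF w p * m -
          (X ^ (k'+1) * ((C f * X + C g) * m ^ 2) + C ((k' : F) + 1) * C w * p * m +
            X * p * dpoly hD hF w m)) = 0 := by
      rw [← auxE k' X (dpoly hD hF w p) m (C f * X + C g) p (dpoly hD hF w m)
        (C ((k' : F) + 1)) (C w)]
      exact sub_eq_zero_of_eq hsub
    have hXne : (X : Polynomial F) ^ (k'+1) ≠ 0 := pow_ne_zero _ X_ne_zero
    have heq2 := (mul_eq_zero.mp hfac).resolve_left hXne
    have heq3 := sub_eq_zero.mp heq2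
    have h0 := congrArg (Polynomial.eval 0) heq3
    simp only [eval_mul, eval_add, eval_pow, eval_X, eval_C, zero_mul, mul_zero, zero_add,
      add_zero, zero_pow, Nat.succ_ne_zero, ne_eq, not_false_iff] at h0
    -- h0 : 0 = ((k':F)+1) * w * p.eval 0 * m.eval 0
    have hkF : ((k' : F) + 1) ≠ 0 := by
      intro h
      have h2 := congrArg (fun a : F => (a : L)) h
      push_cast at h2
      exact hchar (k' + 1) (Nat.succ_ne_zero k') (by exact_mod_cast h2)
    have hwF : w ≠ 0 := fun h => hw0 (by rw [h]; rfl)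
    exact (mul_ne_zero (mul_ne_zero (mul_ne_zero hkF hwF) hp00) hm0) h0.symm
  · -- q(0) ≠ 0 : immediate contradiction
    have h0 := congrArg (Polynomial.eval 0) hid
    simp only [eval_mul, eval_add, eval_pow, eval_X, eval_C, zero_mul, mul_zero, zero_add,
      add_zero] at h0
    exact (mul_ne_zero hgF (pow_ne_zero 2 hq00)) h0.symm

end MainTwo

section Transfer
open Polynomial

variable {L : Type*} [Field L]

theorem algebraMap_adjoin_coe {Cb : Subfield L} (S : Set L)
    (x : Algebra.adjoin (↥Cb) S) : algebraMap (Algebra.adjoin (↥Cb) S) L x = ↑x := rfl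

set_option synthInstance.maxHeartbeats 1000000 in
/-- Transfer transcendence over `Algebra.adjoin` to `Tr` over the generated subfield. -/
theorem Tr_of_transcendental {Cb : Subfield L} {S : Set L} {t : L}
    (htr : Transcendental (Algebra.adjoin (↥Cb) S) t) : Tr (adjoinSF Cb S) t := by
  intro p hpz
  by_contra hp0
  apply htr
  set A := Algebra.adjoin (↥Cb) S with hA
  have hconv : ∀ y : L, y ∈ Subring.closure ((Cb : Set L) ∪ S) → y ∈ A := by
    intro y hy
    have h1 : Set.range (algebraMap (↥Cb) L) = (Cb : Set L) := by
      ext v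
      constructor
      · rintro ⟨a, rfl⟩; exact a.2
      · intro hv; exact ⟨⟨v, hv⟩, rfl⟩
    have h2 := Algebra.adjoin_eq_ring_closure (R := ↥Cb) (A := L) S
    rw [← Subalgebra.mem_toSubring, h2, h1]
    exact hy
  have hrat : ∀ i : ℕ, ∃ a b : L, a ∈ A ∧ b ∈ A ∧ b ≠ 0 ∧ (p.coeff i : L) = a / b := by
    intro i
    have hmem : (p.coeff i : L) ∈ Subfield.closure ((Cb : Set L) ∪ S) := (p.coeff i).2
    obtain ⟨y, hy, zz, hzz, hyz⟩ := Subfield.mem_closure_iff.mp hmem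
    by_cases hz0 : zz = 0
    · refine ⟨0, 1, A.zero_mem, A.one_mem, one_ne_zero, ?_⟩
      rw [← hyz, hz0, div_zero, zero_div]
    · exact ⟨y, zz, hconv y hy, hconv zz hzz, hz0, hyz.symm⟩
  choose a b ha hb hbne hab using hrat
  set B : L := ∏ i ∈ p.support, b i with hB
  have hBne : B ≠ 0 := Finset.prod_ne_zero_iff.mpr fun i _ => hbne i
  have key : ∀ i : ℕ, B * (p.coeff i : L) ∈ A := by
    intro i
    by_cases hi : i ∈ p.support
    · have hBfac : B = b i * ∏ j ∈ p.support.erase i, b j :=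
        (Finset.mul_prod_erase _ _ hi).symm
      have heq : B * (p.coeff i : L) = a i * ∏ j ∈ p.support.erase i, b j := by
        rw [hab i, hBfac, div_eq_mul_inv]
        rw [show (b i * ∏ j ∈ p.support.erase i, b j) * (a i * (b i)⁻¹)
            = (b i * (b i)⁻¹) * (a i * ∏ j ∈ p.support.erase i, b j) from by ring]
        rw [mul_inv_cancel₀ (hbne i), one_mul]
      rw [heq]
      exact mul_mem (ha i) (prod_mem fun j _ => hb j)
    · have h0 : p.coeff i = 0 := notMem_support_iff.mp hi
      have h0' : (p.coeff i : L) = 0 := by rw [h0]; rfl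
      rw [h0', mul_zero]
      exact A.zero_mem
  set q : Polynomial A := ∑ i ∈ p.support, monomial i (⟨B * (p.coeff i : L), key i⟩ : A)
    with hq
  have hqcoeff : ∀ n : ℕ, n ∈ p.support → q.coeff n = ⟨B * (p.coeff n : L), key n⟩ := by
    intro n hn
    rw [hq, finset_sum_coeff]
    rw [Finset.sum_eq_single n]
    · rw [coeff_monomial, if_pos rfl]
    · intro i _ hne
      rw [coeff_monomial, if_neg hne]
    · intro hcon
      exact absurd hn hcon
  have hps : aeval t p = ∑ i ∈ p.support, (p.coeff i : L) * t ^ i := by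
    conv_lhs => rw [as_sum_support p]
    rw [map_sum]
    congr 1
    funext i
    rw [aeval_monomial, algebraMap_SF]
  refine ⟨q, ?_, ?_⟩
  · intro hq0
    have hn : p.natDegree ∈ p.support := natDegree_mem_support_of_nonzero hp0
    have h1 := hqcoeff p.natDegree hn
    rw [hq0, coeff_zero] at h1
    have h2 : B * (p.coeff p.natDegree : L) = 0 := congrArg Subtype.val h1.symm
    rcases mul_eq_zero.mp h2 with h | h
    · exact hBne h
    · have : p.coeff p.natDegree ≠ 0 := mem_support_iff.mp hn
      exact this (Subtype.ext h)
  · rw [hq, map_sum]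
    have hterm : ∀ i ∈ p.support,
        aeval t (monomial i (⟨B * (p.coeff i : L), key i⟩ : A)) =
          B * ((p.coeff i : L) * t ^ i) := by
      intro i _
      rw [aeval_monomial, algebraMap_adjoin_coe]
      push_cast
      ring
    rw [Finset.sum_congr rfl hterm, ← Finset.mul_sum, ← hps, hpz, mul_zero]

end Transfer

section Engine
open Polynomial

variable {L : Type*} [Field L] {D : L → L}

theorem mainClassify (hD : IsDeriv D)
    (C0 : Subfield L) (hC0d : ∀ c ∈ C0, D c = 0)
    (hconst : ∀ x : L, D x = 0 → x ∈ C0)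
    (hchar : ∀ n : ℕ, n ≠ 0 → (n : L) ≠ 0)
    (z ζ₁ ζ₂ : L) (hz : D z = 1) (hζ₁ : D ζ₁ = z⁻¹) (hζ₂ : D ζ₂ = (z * ζ₁)⁻¹)
    (trz : Tr C0 z) (trζ₁ : Tr (adjoinSF C0 {z}) ζ₁) (trζ₂ : Tr (adjoinSF C0 {z, ζ₁}) ζ₂)
    (hgen : adjoinSF C0 {z, ζ₁, ζ₂} = ⊤) :
    (∀ K : Subfield L, IsDiffSubfield D K → C0 ≤ K →
      K = C0 ∨ K = adjoinSF C0 {z} ∨ K = adjoinSF C0 {z, ζ₁} ∨ K = ⊤) ∧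
    adjoinSF C0 {x : L | D x ∈ C0} = adjoinSF C0 {z} ∧
    adjoinSF (adjoinSF C0 {z}) {x : L | D x ∈ adjoinSF C0 {z}} = adjoinSF C0 {z, ζ₁} ∧
    adjoinSF (adjoinSF C0 {z, ζ₁}) {x : L | D x ∈ adjoinSF C0 {z, ζ₁}} = ⊤ := by
  set F1 := adjoinSF C0 {z} with hF1def
  set F2 := adjoinSF C0 {z, ζ₁} with hF2def
  have hzF1 : z ∈ F1 := subset_adjoinSF _ _ rfl
  have hzF2 : z ∈ F2 := subset_adjoinSF _ _ (Set.mem_insert _ _)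
  have hζ₁F2 : ζ₁ ∈ F2 := subset_adjoinSF _ _ (Set.mem_insert_of_mem _ rfl)
  have hC0F1 : C0 ≤ F1 := le_adjoinSF _ _
  have hC0F2 : C0 ≤ F2 := le_adjoinSF _ _
  have hF1F2 : F1 ≤ F2 := adjoinSF_le hC0F2 (Set.singleton_subset_iff.mpr hzF2)
  have hzne : z ≠ 0 := by
    intro h; rw [h, D_zero hD] at hz; exact one_ne_zero hz.symm
  have hzinvne : z⁻¹ ≠ 0 := inv_ne_zero hzne
  have hζ₁ne : ζ₁ ≠ 0 := by
    intro h; rw [h, D_zero hD] at hζ₁; exact hzinvne hζ₁.symm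
  have hC0diff : IsDiffSubfield D C0 := fun c hc => by
    rw [hC0d c hc]; exact C0.zero_mem
  have hF1diff : IsDiffSubfield D F1 := adjoinSF_diff hD hC0diff (by
    intro s hs; rw [Set.mem_singleton_iff] at hs; subst hs
    rw [hz]; exact Subfield.one_mem _)
  have hF2diff : IsDiffSubfield D F2 := adjoinSF_diff hD hC0diff (by
    intro s hs
    rcases hs with rfl | hs
    · rw [hz]; exact Subfield.one_mem _
    · rw [Set.mem_singleton_iff] at hs; subst hs
      rw [hζ₁]; exact Subfield.inv_mem _ hzF2)
  have hF2eq : F2 = adjoinSF F1 {ζ₁} := by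
    rw [hF2def, hF1def, adjoinSF_assoc C0 {z} {ζ₁}, Set.singleton_union]
  have hsets : ({z, ζ₁} ∪ {ζ₂} : Set L) = {z, ζ₁, ζ₂} := by
    ext x; simp only [Set.mem_union, Set.mem_insert_iff, Set.mem_singleton_iff]; tauto
  have hTopEq : (⊤ : Subfield L) = adjoinSF F2 {ζ₂} := by
    rw [hF2def, adjoinSF_assoc C0 {z, ζ₁} {ζ₂}, hsets, hgen]
  -- algebraic closure steps via Lemma Z
  have stepZ : ∀ K : Subfield L, IsDiffSubfield D K → C0 ≤ K →
      (∃ P : Polynomial K, P ≠ 0 ∧ Polynomial.aeval z P = 0) → z ∈ K := by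
    intro K hKd hCK hAlg
    exact lemZ hD hKd hchar C0 hCK hconst hAlg (w := ⟨1, K.one_mem⟩) hz
  -- KEY STEP A
  have keyA : ∀ K : Subfield L, IsDiffSubfield D K → C0 ≤ K →
      ∀ u ∈ K, u ∉ C0 → z ∈ K := by
    intro K hKd hCK u huK huC
    by_cases hu1 : u ∈ F1
    · exact stepZ K hKd hCK (alg_of_mem_adjoin hu1 huC hCK huK)
    · apply stepZ K hKd hCK
      by_contra hzalg
      have htrKz : Tr K z := by
        intro p hp
        by_contra hp0
        exact hzalg ⟨p, hp0, hp⟩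
      set K1 := adjoinSF K {z} with hK1
      have hzK1 : z ∈ K1 := subset_adjoinSF _ _ rfl
      have hK1d : IsDiffSubfield D K1 := adjoinSF_diff hD hKd (by
        intro s hs; rw [Set.mem_singleton_iff] at hs; subst hs
        rw [hz]; exact Subfield.one_mem _)
      have hCK1 : C0 ≤ K1 := hCK.trans (le_adjoinSF _ _)
      have hF1K1 : F1 ≤ K1 := adjoinSF_le hCK1 (Set.singleton_subset_iff.mpr hzK1)
      have huK1 : u ∈ K1 := le_adjoinSF _ _ huK
      have hζ₁algK1 : ∃ P : Polynomial K1, P ≠ 0 ∧ Polynomial.aeval ζ₁ P = 0 := by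
        by_cases hu2 : u ∈ F2
        · exact alg_of_mem_adjoin (hF2eq ▸ hu2) hu1 hF1K1 huK1
        · by_contra hζalg
          have htrK1 : Tr K1 ζ₁ := by
            intro p hp
            by_contra hp0
            exact hζalg ⟨p, hp0, hp⟩
          set K2 := adjoinSF K1 {ζ₁} with hK2
          have hζ₁K2 : ζ₁ ∈ K2 := subset_adjoinSF _ _ rfl
          have hzK2 : z ∈ K2 := le_adjoinSF _ _ hzK1
          have hK2d : IsDiffSubfield D K2 := adjoinSF_diff hD hK1d (by
            intro s hs; rw [Set.mem_singleton_iff] at hs; subst hs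
            rw [hζ₁]; exact Subfield.inv_mem _ (le_adjoinSF _ _ hzK1))
          have hCK2 : C0 ≤ K2 := hCK1.trans (le_adjoinSF _ _)
          have hF2K2 : F2 ≤ K2 := adjoinSF_le hCK2 (by
            intro s hs
            rcases hs with rfl | hs
            · exact hzK2
            · rw [Set.mem_singleton_iff] at hs; subst hs; exact hζ₁K2)
          have huK2 : u ∈ K2 := le_adjoinSF _ _ huK1
          have hutop : u ∈ adjoinSF F2 {ζ₂} := by rw [← hTopEq]; exact Subfield.mem_top u
          have hζ₂alg := alg_of_mem_adjoin hutop hu2 hF2K2 huK2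
          have hζ₂K2 : ζ₂ ∈ K2 :=
            lemZ hD hK2d hchar C0 hCK2 hconst hζ₂alg
              (w := ⟨(z * ζ₁)⁻¹, Subfield.inv_mem _ (Subfield.mul_mem _ hzK2 hζ₁K2)⟩) hζ₂
          have hg := lemL2 hD hK1d htrK1 (w := ⟨z⁻¹, Subfield.inv_mem _ hzK1⟩) hζ₁
            hzinvne hchar hζ₂K2 (f := 0) (g := ⟨z⁻¹, Subfield.inv_mem _ hzK1⟩)
            (by rw [hζ₂, mul_inv]
                show z⁻¹ * ζ₁⁻¹ = 0 + z⁻¹ * ζ₁⁻¹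
                rw [zero_add])
          exact hzinvne hg
      have hζ₁K1 : ζ₁ ∈ K1 :=
        lemZ hD hK1d hchar C0 hCK1 hconst hζ₁algK1
          (w := ⟨z⁻¹, Subfield.inv_mem _ hzK1⟩) hζ₁
      have hone := lemL2 hD hKd htrKz (w := ⟨1, K.one_mem⟩) hz one_ne_zero hchar
        hζ₁K1 (f := 0) (g := ⟨1, K.one_mem⟩)
        (by rw [hζ₁]
            show z⁻¹ = 0 + 1 * z⁻¹
            rw [zero_add, one_mul])
      exact one_ne_zero hone
  -- KEY STEP B
  have keyB : ∀ K : Subfield L, IsDiffSubfield D K → C0 ≤ K → z ∈ K →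
      ∀ u ∈ K, u ∉ F1 → ζ₁ ∈ K := by
    intro K hKd hCK hzK u huK hu1
    have hF1K : F1 ≤ K := adjoinSF_le hCK (Set.singleton_subset_iff.mpr hzK)
    refine lemZ hD hKd hchar C0 hCK hconst ?_ (w := ⟨z⁻¹, Subfield.inv_mem _ hzK⟩) hζ₁
    by_cases hu2 : u ∈ F2
    · exact alg_of_mem_adjoin (hF2eq ▸ hu2) hu1 hF1K huK
    · by_contra hζalg
      have htrK : Tr K ζ₁ := by
        intro p hp
        by_contra hp0
        exact hζalg ⟨p, hp0, hp⟩
      set K2 := adjoinSF K {ζ₁} with hK2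
      have hζ₁K2 : ζ₁ ∈ K2 := subset_adjoinSF _ _ rfl
      have hzK2 : z ∈ K2 := le_adjoinSF _ _ hzK
      have hK2d : IsDiffSubfield D K2 := adjoinSF_diff hD hKd (by
        intro s hs; rw [Set.mem_singleton_iff] at hs; subst hs
        rw [hζ₁]; exact Subfield.inv_mem _ (le_adjoinSF _ _ hzK))
      have hCK2 : C0 ≤ K2 := hCK.trans (le_adjoinSF _ _)
      have hF2K2 : F2 ≤ K2 := adjoinSF_le hCK2 (by
        intro s hs
        rcases hs with rfl | hs
        · exact hzK2
        · rw [Set.mem_singleton_iff] at hs; subst hs; exact hζ₁K2)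
      have huK2 : u ∈ K2 := le_adjoinSF _ _ huK
      have hutop : u ∈ adjoinSF F2 {ζ₂} := by rw [← hTopEq]; exact Subfield.mem_top u
      have hζ₂alg := alg_of_mem_adjoin hutop hu2 hF2K2 huK2
      have hζ₂K2 : ζ₂ ∈ K2 :=
        lemZ hD hK2d hchar C0 hCK2 hconst hζ₂alg
          (w := ⟨(z * ζ₁)⁻¹, Subfield.inv_mem _ (Subfield.mul_mem _ hzK2 hζ₁K2)⟩) hζ₂
      have hg := lemL2 hD hKd htrK (w := ⟨z⁻¹, Subfield.inv_mem _ hzK⟩) hζ₁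
        hzinvne hchar hζ₂K2 (f := 0) (g := ⟨z⁻¹, Subfield.inv_mem _ hzK⟩)
        (by rw [hζ₂, mul_inv]
            show z⁻¹ * ζ₁⁻¹ = 0 + z⁻¹ * ζ₁⁻¹
            rw [zero_add])
      exact hzinvne hg
  -- KEY STEP C
  have keyC : ∀ K : Subfield L, IsDiffSubfield D K → C0 ≤ K → z ∈ K → ζ₁ ∈ K →
      ∀ u ∈ K, u ∉ F2 → ζ₂ ∈ K := by
    intro K hKd hCK hzK hζ₁K u huK hu2
    have hF2K : F2 ≤ K := adjoinSF_le hCK (by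
      intro s hs
      rcases hs with rfl | hs
      · exact hzK
      · rw [Set.mem_singleton_iff] at hs; subst hs; exact hζ₁K)
    have hutop : u ∈ adjoinSF F2 {ζ₂} := by rw [← hTopEq]; exact Subfield.mem_top u
    exact lemZ hD hKd hchar C0 hCK hconst (alg_of_mem_adjoin hutop hu2 hF2K huK)
      (w := ⟨(z * ζ₁)⁻¹, Subfield.inv_mem _ (Subfield.mul_mem _ hzK hζ₁K)⟩) hζ₂
  -- CLASSIFICATION
  have hclass : ∀ K : Subfield L, IsDiffSubfield D K → C0 ≤ K →
      K = C0 ∨ K = F1 ∨ K = F2 ∨ K = ⊤ := by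
    intro K hKd hCK
    by_cases h1 : K = C0
    · exact Or.inl h1
    obtain ⟨u, huK, huC⟩ : ∃ u, u ∈ K ∧ u ∉ C0 := by
      by_contra hcon
      push_neg at hcon
      exact h1 (le_antisymm (fun x hx => hcon x hx) hCK)
    have hzK := keyA K hKd hCK u huK huC
    have hF1K : F1 ≤ K := adjoinSF_le hCK (Set.singleton_subset_iff.mpr hzK)
    by_cases h2 : K = F1
    · exact Or.inr (Or.inl h2)
    obtain ⟨v, hvK, hv1⟩ : ∃ v, v ∈ K ∧ v ∉ F1 := by
      by_contra hcon
      push_neg at hcon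
      exact h2 (le_antisymm (fun x hx => hcon x hx) hF1K)
    have hζ₁K := keyB K hKd hCK hzK v hvK hv1
    have hF2K : F2 ≤ K := adjoinSF_le hCK (by
      intro s hs
      rcases hs with rfl | hs
      · exact hzK
      · rw [Set.mem_singleton_iff] at hs; subst hs; exact hζ₁K)
    by_cases h3 : K = F2
    · exact Or.inr (Or.inr (Or.inl h3))
    obtain ⟨v2, hv2K, hv2F⟩ : ∃ v2, v2 ∈ K ∧ v2 ∉ F2 := by
      by_contra hcon
      push_neg at hcon
      exact h3 (le_antisymm (fun x hx => hcon x hx) hF2K)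
    have hζ₂K := keyC K hKd hCK hzK hζ₁K v2 hv2K hv2F
    refine Or.inr (Or.inr (Or.inr (le_antisymm le_top ?_)))
    rw [← hgen]
    apply adjoinSF_le hCK
    intro s hs
    rcases hs with rfl | hs
    · exact hzK
    rcases hs with rfl | hs
    · exact hζ₁K
    rw [Set.mem_singleton_iff] at hs; subst hs; exact hζ₂K
  -- adCl computations
  have hadCl1 : adjoinSF C0 {x : L | D x ∈ C0} = F1 := by
    apply le_antisymm
    · apply adjoinSF_le hC0F1
      intro x hx
      have hx' : D x ∈ C0 := hx
      have hxTop : x ∈ adjoinSF F2 {ζ₂} := by rw [← hTopEq]; exact Subfield.mem_top x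
      obtain ⟨c, a, hcC, haF2, hxe⟩ := lemL1 hD hF2diff trζ₂
        (w := ⟨(z * ζ₁)⁻¹, Subfield.inv_mem _ (Subfield.mul_mem _ hzF2 hζ₁F2)⟩) hζ₂
        hchar hC0F2 hconst hxTop (r := ⟨D x, hC0F2 hx'⟩) rfl
      have hc0 : c = 0 := by
        by_contra hc0
        have haDa : D a = ↑(⟨D x, hC0F1 hx'⟩ : F1) +
            ↑(⟨-(c * z⁻¹), Subfield.neg_mem _
              (Subfield.mul_mem _ (hC0F1 hcC) (Subfield.inv_mem _ hzF1))⟩ : F1) * ζ₁⁻¹ := by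
          have ha2 : a = x - c * ζ₂ := by rw [hxe]; ring
          rw [ha2, D_sub hD, hD.2, hC0d c hcC, hζ₂, mul_inv]
          show D x - (0 * ζ₂ + c * (z⁻¹ * ζ₁⁻¹)) = D x + -(c * z⁻¹) * ζ₁⁻¹
          ring
        have hg := lemL2 hD hF1diff trζ₁ (w := ⟨z⁻¹, Subfield.inv_mem _ hzF1⟩) hζ₁
          hzinvne hchar (hF2eq ▸ haF2) haDa
        have hcz : -(c * z⁻¹) = 0 := hg
        rcases mul_eq_zero.mp (neg_eq_zero.mp hcz) with h | h
        · exact hc0 h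
        · exact hzinvne h
      rw [hc0, zero_mul, zero_add] at hxe
      have hxF2 : x ∈ F2 := hxe ▸ haF2
      obtain ⟨c₁, b, hc₁C, hbF1, hxe1⟩ := lemL1 hD hF1diff trζ₁
        (w := ⟨z⁻¹, Subfield.inv_mem _ hzF1⟩) hζ₁ hchar hC0F1 hconst
        (hF2eq ▸ hxF2) (r := ⟨D x, hC0F1 hx'⟩) rfl
      have hc₁0 : c₁ = 0 := by
        by_contra hc₁0
        have hbDb : D b = ↑(⟨D x, hx'⟩ : C0) + ↑(⟨-c₁, Subfield.neg_mem _ hc₁C⟩ : C0) * z⁻¹ := by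
          have hb2 : b = x - c₁ * ζ₁ := by rw [hxe1]; ring
          rw [hb2, D_sub hD, hD.2, hC0d c₁ hc₁C, hζ₁]
          show D x - (0 * ζ₁ + c₁ * z⁻¹) = D x + -c₁ * z⁻¹
          ring
        have hg := lemL2 hD hC0diff trz (w := ⟨1, C0.one_mem⟩) hz one_ne_zero hchar hbF1 hbDb
        exact hc₁0 (neg_eq_zero.mp hg)
      rw [hc₁0, zero_mul, zero_add] at hxe1
      exact hxe1 ▸ hbF1
    · apply adjoinSF_mono C0
      intro s hs
      rw [Set.mem_singleton_iff] at hs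
      rw [hs]
      show D z ∈ C0
      rw [hz]; exact C0.one_mem
  have hadCl2 : adjoinSF F1 {x : L | D x ∈ F1} = F2 := by
    apply le_antisymm
    · apply adjoinSF_le hF1F2
      intro x hx
      have hx' : D x ∈ F1 := hx
      have hxTop : x ∈ adjoinSF F2 {ζ₂} := by rw [← hTopEq]; exact Subfield.mem_top x
      obtain ⟨c, a, hcC, haF2, hxe⟩ := lemL1 hD hF2diff trζ₂
        (w := ⟨(z * ζ₁)⁻¹, Subfield.inv_mem _ (Subfield.mul_mem _ hzF2 hζ₁F2)⟩) hζ₂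
        hchar hC0F2 hconst hxTop (r := ⟨D x, hF1F2 hx'⟩) rfl
      have hc0 : c = 0 := by
        by_contra hc0
        have haDa : D a = ↑(⟨D x, hx'⟩ : F1) +
            ↑(⟨-(c * z⁻¹), Subfield.neg_mem _
              (Subfield.mul_mem _ (hC0F1 hcC) (Subfield.inv_mem _ hzF1))⟩ : F1) * ζ₁⁻¹ := by
          have ha2 : a = x - c * ζ₂ := by rw [hxe]; ring
          rw [ha2, D_sub hD, hD.2, hC0d c hcC, hζ₂, mul_inv]
          show D x - (0 * ζ₂ + c * (z⁻¹ * ζ₁⁻¹)) = D x + -(c * z⁻¹) * ζ₁⁻¹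
          ring
        have hg := lemL2 hD hF1diff trζ₁ (w := ⟨z⁻¹, Subfield.inv_mem _ hzF1⟩) hζ₁
          hzinvne hchar (hF2eq ▸ haF2) haDa
        rcases mul_eq_zero.mp (neg_eq_zero.mp hg) with h | h
        · exact hc0 h
        · exact hzinvne h
      rw [hc0, zero_mul, zero_add] at hxe
      exact hxe ▸ haF2
    · rw [hF2eq]
      apply adjoinSF_mono F1
      intro s hs
      rw [Set.mem_singleton_iff] at hs
      rw [hs]
      show D ζ₁ ∈ F1
      rw [hζ₁]; exact Subfield.inv_mem _ hzF1
  have hadCl3 : adjoinSF F2 {x : L | D x ∈ F2} = ⊤ := by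
    apply le_antisymm le_top
    rw [hTopEq]
    apply adjoinSF_mono F2
    intro s hs
    rw [Set.mem_singleton_iff] at hs
    rw [hs]
    show D ζ₂ ∈ F2
    rw [hζ₂]; exact Subfield.inv_mem _ (Subfield.mul_mem _ hzF2 hζ₁F2)
  exact ⟨hclass, hadCl1, hadCl2, hadCl3⟩

end Engine

end Proof12Aux

/-- `L = ℂ(z, ζ₁, ζ₂)` models `ℂ(z, log z, log(log z))` with
`z' = 1`, `ζ₁' = 1/z`, `ζ₂' = 1/(zζ₁)`, constants `ℂ`, and `z, ζ₁, ζ₂`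
algebraically independent over `ℂ`. Then the only differential subfields of `L`
containing `ℂ` are `ℂ`, `ℂ(z)`, `ℂ(z,ζ₁)` and `L`; the normal tower of `L` over
`ℂ` is `L ⊃ ℂ(z,ζ₁) ⊃ ℂ(z) ⊃ ℂ`. -/
theorem statement12 {L : Type*} [Field L] (D : L → L) (hD : IsDeriv D)
    (ι : ℂ →+* L) (hι : ∀ c : ℂ, D (ι c) = 0)
    (z ζ₁ ζ₂ : L)
    (hz : D z = 1) (hζ₁ : D ζ₁ = z⁻¹) (hζ₂ : D ζ₂ = (z * ζ₁)⁻¹)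
    (halg : AlgebraicIndependent ι.fieldRange ![z, ζ₁, ζ₂])
    (hconst : ∀ x : L, D x = 0 → x ∈ ι.fieldRange)  -- the constants of L are ℂ
    (hgen : adjoinSF ι.fieldRange {z, ζ₁, ζ₂} = ⊤) :
    (∀ K : Subfield L, IsDiffSubfield D K → ι.fieldRange ≤ K →
      K = ι.fieldRange ∨ K = adjoinSF ι.fieldRange {z} ∨
        K = adjoinSF ι.fieldRange {z, ζ₁} ∨ K = ⊤) ∧
    adCl D ι.fieldRange = adjoinSF ι.fieldRange {z} ∧
    adCl D (adjoinSF ι.fieldRange {z}) = adjoinSF ι.fieldRange {z, ζ₁} ∧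
    adCl D (adjoinSF ι.fieldRange {z, ζ₁}) = (⊤ : Subfield L) := by
  have hC0d : ∀ c ∈ ι.fieldRange, D c = 0 := by
    rintro c hc
    obtain ⟨a, rfl⟩ := RingHom.mem_fieldRange.mp hc
    exact hι a
  have hchar : ∀ n : ℕ, n ≠ 0 → (n : L) ≠ 0 := by
    intro n hn h
    have h1 : ι (n : ℂ) = (n : L) := map_natCast ι n
    rw [h] at h1
    have h2 : ι (n : ℂ) = ι 0 := by rw [h1, map_zero]
    have h3 : (n : ℂ) = 0 := ι.injective h2
    exact hn (Nat.cast_eq_zero.mp h3)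
  -- transcendence facts
  have trz : Tr ι.fieldRange z := by
    have h := halg.transcendental (0 : Fin 3)
    intro p hp
    by_contra hp0
    exact h ⟨p, hp0, hp⟩
  have trζ₁ : Tr (adjoinSF ι.fieldRange {z}) ζ₁ := by
    have h1 : AlgebraicIndependent ι.fieldRange ![z] := by
      have h := halg.comp (fun _ : Fin 1 => 0) (fun a b _ => Subsingleton.elim a b)
      have he : ![z, ζ₁, ζ₂] ∘ (fun _ : Fin 1 => 0) = ![z] := by
        funext i; fin_cases i; rfl
      rwa [he] at h
    have h2 : AlgebraicIndependent ι.fieldRange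
        (fun o : Option (Fin 1) => o.elim ζ₁ ![z]) := by
      have h := halg.comp (fun o : Option (Fin 1) => o.elim 1 (fun _ => 0)) (by decide)
      have he : ![z, ζ₁, ζ₂] ∘ (fun o : Option (Fin 1) => o.elim 1 (fun _ => 0))
          = (fun o : Option (Fin 1) => o.elim ζ₁ ![z]) := by
        funext o
        cases o with
        | none => rfl
        | some i =>
          show ![z, ζ₁, ζ₂] 0 = ![z] i
          fin_cases i
          rfl
      rwa [he] at h
    have h3 := (h1.option_iff_transcendental ζ₁).mp h2
    rw [Matrix.range_cons_empty] at h3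
    exact Tr_of_transcendental h3
  have trζ₂ : Tr (adjoinSF ι.fieldRange {z, ζ₁}) ζ₂ := by
    have h1 : AlgebraicIndependent ι.fieldRange ![z, ζ₁] := by
      have h := halg.comp (Fin.castSucc : Fin 2 → Fin 3) (Fin.castSucc_injective 2)
      have he : ![z, ζ₁, ζ₂] ∘ (Fin.castSucc : Fin 2 → Fin 3) = ![z, ζ₁] := by
        funext i; fin_cases i <;> rfl
      rwa [he] at h
    have h2 : AlgebraicIndependent ι.fieldRange
        (fun o : Option (Fin 2) => o.elim ζ₂ ![z, ζ₁]) := by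
      have h := halg.comp (fun o : Option (Fin 2) => o.elim 2 Fin.castSucc) (by decide)
      have he : ![z, ζ₁, ζ₂] ∘ (fun o : Option (Fin 2) => o.elim 2 Fin.castSucc)
          = (fun o : Option (Fin 2) => o.elim ζ₂ ![z, ζ₁]) := by
        funext o
        cases o with
        | none => rfl
        | some i =>
          show ![z, ζ₁, ζ₂] (Fin.castSucc i) = ![z, ζ₁] i
          fin_cases i <;> rfl
      rwa [he] at h
    have h3 := (h1.option_iff_transcendental ζ₂).mp h2
    rw [Matrix.range_cons_cons_empty] at h3
    exact Tr_of_transcendental h3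
  obtain ⟨hclass, ha1, ha2, ha3⟩ := mainClassify hD ι.fieldRange hC0d hconst hchar
    z ζ₁ ζ₂ hz hζ₁ hζ₂ trz trζ₁ trζ₂ hgen
  exact ⟨hclass, ha1, ha2, ha3⟩
end
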